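/- arXiv:1612.01364 — 6 statements merged into one kernel-verified Lean document; each statement's English description precedes it below -/
import Mathlib

section
/- Let X and Y be Banach spaces and let f: X → Y be a coarse Lipschitz equivalence. Then there exist A₀ > 0 and K ≥ 1 such that for every A ≥ A₀ and every maximal A-separated subset 𝓜 of X, the image 𝓝 = f(𝓜) is a net in Y and (1/K)·‖x−x'‖ ≤ ‖f(x)−f(x')‖ ≤ K·‖x−x'‖ for all x, x' ∈ 𝓜. -/
open Metric Filter Topology Pointwise
open scoped ENNReal NNReal

noncomputable section

section Defs

variable {M N : Type*} [PseudoMetricSpace M] [PseudoMetricSpace N]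

/-- `Lip_s(f) = sup { dist (f x) (f y) / dist x y : dist x y ≥ s }`, valued in `ℝ≥0∞`. -/
def lipS (f : M → N) (s : ℝ) : ℝ≥0∞ :=
  ⨆ (x : M) (y : M) (_ : s ≤ dist x y), ENNReal.ofReal (dist (f x) (f y) / dist x y)

/-- `Lip_∞(f) = inf_{s > 0} Lip_s(f)`. -/
def lipInfty (f : M → N) : ℝ≥0∞ := ⨅ (s : ℝ) (_ : 0 < s), lipS f s

/-- A map is coarse Lipschitz when `Lip_∞(f) < ∞`. -/
def CoarseLipschitz (f : M → N) : Prop := lipInfty f < ⊤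

/-- Coarse Lipschitz equivalence. -/
def IsCLEquiv (f : M → N) : Prop :=
  CoarseLipschitz f ∧ ∃ g : N → M, CoarseLipschitz g ∧ ∃ C : ℝ, 0 ≤ C ∧
    (∀ x, dist (g (f x)) x ≤ C) ∧ (∀ y, dist (f (g y)) y ≤ C)

/-- An `(a,b)`-net for some `0 < a ≤ b`. -/
def IsNet (s : Set M) : Prop :=
  ∃ a b : ℝ, 0 < a ∧ a ≤ b ∧ (∀ z ∈ s, ∀ z' ∈ s, z ≠ z' → a ≤ dist z z') ∧
    ∀ x : M, Metric.infDist x s < b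

/-- `A`-separated subset. -/
def IsSep (A : ℝ) (s : Set M) : Prop := ∀ x ∈ s, ∀ x' ∈ s, x ≠ x' → A ≤ dist x x'

/-- Maximal `A`-separated subset. -/
def IsMaxSep (A : ℝ) (s : Set M) : Prop :=
  IsSep A s ∧ ∀ t : Set M, s ⊆ t → IsSep A t → t = s

end Defs

private lemma cl_extract {M N : Type*} [PseudoMetricSpace M] [PseudoMetricSpace N]
    {f : M → N} (h : CoarseLipschitz f) :
    ∃ s L : ℝ, 0 < s ∧ 1 ≤ L ∧ ∀ x y : M, s ≤ dist x y → dist (f x) (f y) ≤ L * dist x y := by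
  rw [CoarseLipschitz, lipInfty, iInf_lt_iff] at h
  obtain ⟨s, hs⟩ := h
  rw [iInf_lt_iff] at hs
  obtain ⟨hs0, hfin⟩ := hs
  refine ⟨s, (lipS f s).toReal + 1, hs0, le_add_of_nonneg_left ENNReal.toReal_nonneg, ?_⟩
  intro x y hxy
  have hd : 0 < dist x y := lt_of_lt_of_le hs0 hxy
  have h1 : ENNReal.ofReal (dist (f x) (f y) / dist x y) ≤ lipS f s := by
    unfold lipS
    exact le_iSup_of_le x (le_iSup_of_le y (le_iSup_of_le hxy le_rfl))
  have h2 : lipS f s ≤ ENNReal.ofReal ((lipS f s).toReal + 1) := by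
    conv_lhs => rw [← ENNReal.ofReal_toReal hfin.ne]
    exact ENNReal.ofReal_le_ofReal (by linarith [ENNReal.toReal_nonneg (a := lipS f s)])
  have h3 := le_trans h1 h2
  rw [ENNReal.ofReal_le_ofReal_iff (by positivity)] at h3
  rwa [div_le_iff₀ hd] at h3

private lemma cl_affine {X N : Type*} [NormedAddCommGroup X] [NormedSpace ℝ X]
    [PseudoMetricSpace N] {f : X → N} {s L : ℝ} (hs : 0 < s) (hL : 0 ≤ L)
    (h : ∀ x y : X, s ≤ dist x y → dist (f x) (f y) ≤ L * dist x y) (x y : X) :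
    dist (f x) (f y) ≤ L * dist x y + 2 * L * s := by
  have h2Ls : 0 ≤ 2 * L * s := by positivity
  rcases le_or_gt s (dist x y) with hle | hlt
  · linarith [h x y hle]
  · by_cases hxy : x = y
    · subst hxy
      simpa using h2Ls
    · set e := ‖x - y‖⁻¹ • (x - y) with he_def
      have hxy' : x - y ≠ 0 := sub_ne_zero.mpr hxy
      have hn : ‖x - y‖ ≠ 0 := norm_ne_zero_iff.mpr hxy'
      have hnp : (0:ℝ) < ‖x - y‖ := norm_pos_iff.mpr hxy'
      have he : ‖e‖ = 1 := norm_smul_inv_norm hxy'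
      set w := x + s • e with hw_def
      have hxw : dist x w = s := by
        rw [dist_eq_norm]
        have : x - w = -(s • e) := by rw [hw_def]; abel
        rw [this, norm_neg, norm_smul, he, mul_one, Real.norm_eq_abs, abs_of_pos hs]
      have hkey : x - y = ‖x - y‖ • e := by
        rw [he_def, smul_smul, mul_inv_cancel₀ hn, one_smul]
      have hwy : dist w y = ‖x - y‖ + s := by
        rw [dist_eq_norm]
        have h4 : w - y = (‖x - y‖ + s) • e := by
          rw [add_smul, ← hkey, hw_def]; abel
        rw [h4, norm_smul, he, mul_one, Real.norm_eq_abs, abs_of_pos (by linarith)]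
      have h1 := h x w (by rw [hxw])
      have h2 := h w y (by rw [hwy]; linarith)
      rw [hxw] at h1
      rw [hwy] at h2
      have htri := dist_triangle (f x) (f w) (f y)
      rw [dist_eq_norm]
      linarith

private lemma maxsep_cover {M : Type*} [PseudoMetricSpace M] {A : ℝ} {𝓜 : Set M}
    (hA : 0 < A) (h : IsMaxSep A 𝓜) (x : M) : ∃ m ∈ 𝓜, dist x m < A + 1 := by
  by_contra hc
  push_neg at hc
  have hx : x ∉ 𝓜 := by
    intro hx
    have := hc x hx
    rw [dist_self] at this
    linarith
  have hsep : IsSep A (insert x 𝓜) := by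
    intro z hz z' hz' hne
    rcases hz with rfl | hz
    · rcases hz' with rfl | hz'
      · exact absurd rfl hne
      · linarith [hc z' hz']
    · rcases hz' with rfl | hz'
      · rw [dist_comm]; linarith [hc z hz]
      · exact h.1 z hz z' hz' hne
  have heq := h.2 _ (Set.subset_insert x 𝓜) hsep
  exact hx (heq ▸ Set.mem_insert x 𝓜)
/-- a coarse Lipschitz equivalence maps maximal `A`-separated sets
(for `A` large enough) onto nets, bi-Lipschitzly. -/
theorem stmt1 {X Y : Type*} [NormedAddCommGroup X] [NormedSpace ℝ X] [CompleteSpace X]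
    [NormedAddCommGroup Y] [NormedSpace ℝ Y] [CompleteSpace Y]
    (f : X → Y) (hf : IsCLEquiv f) :
    ∃ A₀ K : ℝ, 0 < A₀ ∧ 1 ≤ K ∧ ∀ A : ℝ, A₀ ≤ A → ∀ 𝓜 : Set X, IsMaxSep A 𝓜 →
      IsNet (f '' 𝓜) ∧ ∀ x ∈ 𝓜, ∀ x' ∈ 𝓜,
        (1 / K) * ‖x - x'‖ ≤ ‖f x - f x'‖ ∧ ‖f x - f x'‖ ≤ K * ‖x - x'‖ := by
  obtain ⟨hfc, g, hgc, C, hC, hgf, hfg⟩ := hf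
  obtain ⟨sf, L, hsf, hL, hfb⟩ := cl_extract hfc
  obtain ⟨sg, L', hsg, hL', hgb⟩ := cl_extract hgc
  have hL0 : (0:ℝ) ≤ L := by linarith
  have hL'0 : (0:ℝ) < L' := by linarith
  have hfb' := cl_affine hsf hL0 hfb
  have hgb' := cl_affine hsg hL'0.le hgb
  set A₀ : ℝ := sf + 4 * C + 4 * L' * sg with hA₀_def
  set K : ℝ := max L (2 * L') with hK_def
  have hL'sg : 0 < L' * sg := mul_pos hL'0 hsg
  have hA₀pos : 0 < A₀ := by rw [hA₀_def]; nlinarith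
  have hKL : L ≤ K := le_max_left _ _
  have hK2 : 2 * L' ≤ K := le_max_right _ _
  have hK1 : (1:ℝ) ≤ K := le_trans hL hKL
  have hK0 : (0:ℝ) < K := by linarith
  refine ⟨A₀, K, hA₀pos, hK1, ?_⟩
  intro A hA 𝓜 h𝓜
  have hApos : 0 < A := lt_of_lt_of_le hA₀pos hA
  have hAsf : sf ≤ A := by rw [hA₀_def] at hA; nlinarith
  have upper : ∀ x ∈ 𝓜, ∀ x' ∈ 𝓜, dist (f x) (f x') ≤ K * dist x x' := by
    intro x hx x' hx'
    by_cases hxx : x = x'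
    · subst hxx; simp [dist_self]
    · have hd : A ≤ dist x x' := h𝓜.1 x hx x' hx' hxx
      have := hfb x x' (by linarith)
      nlinarith [dist_nonneg (x := x) (y := x')]
  have lower : ∀ x ∈ 𝓜, ∀ x' ∈ 𝓜, x ≠ x' → dist x x' ≤ K * dist (f x) (f x') := by
    intro x hx x' hx' hne
    have hd : A ≤ dist x x' := h𝓜.1 x hx x' hx' hne
    have t1 := hgf x
    have t2 := hgf x'
    have t3 := hgb' (f x) (f x')
    have htri := dist_triangle4 x (g (f x)) (g (f x')) x'
    have hc1 : dist x (g (f x)) = dist (g (f x)) x := dist_comm _ _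
    have hc2 : dist (g (f x')) x' ≤ C := t2
    have h1 : dist x x' ≤ 2 * C + L' * dist (f x) (f x') + 2 * L' * sg := by linarith
    have h2 : 4 * C + 4 * L' * sg ≤ dist x x' := by
      rw [hA₀_def] at hA; linarith
    have hD : (0:ℝ) ≤ dist (f x) (f x') := dist_nonneg
    nlinarith [mul_le_mul_of_nonneg_right hK2 hD]
  constructor
  · -- IsNet
    refine ⟨A / K, C + L * (A + 1) + 2 * L * sf + 1, div_pos hApos hK0, ?_, ?_, ?_⟩
    · have h1 : A / K ≤ A := div_le_self hApos.le hK1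
      have h2 : A ≤ L * (A + 1) := by nlinarith
      have h3 : 0 ≤ 2 * L * sf := by positivity
      linarith
    · rintro z ⟨x, hx, rfl⟩ z' ⟨x', hx', rfl⟩ hne
      have hxx : x ≠ x' := fun h => hne (by rw [h])
      have := lower x hx x' hx' hxx
      have hd : A ≤ dist x x' := h𝓜.1 x hx x' hx' hxx
      rw [div_le_iff₀ hK0]
      nlinarith
    · intro y
      obtain ⟨m, hm, hdm⟩ := maxsep_cover hApos h𝓜 (g y)
      have h1 : dist y (f (g y)) ≤ C := by rw [dist_comm]; exact hfg y
      have h2 := hfb' (g y) m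
      have h3 : L * dist (g y) m ≤ L * (A + 1) :=
        mul_le_mul_of_nonneg_left hdm.le hL0
      have htri := dist_triangle y (f (g y)) (f m)
      have h4 : Metric.infDist y (f '' 𝓜) ≤ dist y (f m) :=
        Metric.infDist_le_dist_of_mem (Set.mem_image_of_mem f hm)
      linarith
  · -- bi-Lipschitz estimates
    intro x hx x' hx'
    have hu := upper x hx x' hx'
    rw [dist_eq_norm, dist_eq_norm] at hu
    refine ⟨?_, hu⟩
    by_cases hxx : x = x'
    · subst hxx; simp
    · have hl := lower x hx x' hx' hxx
      rw [dist_eq_norm, dist_eq_norm] at hl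
      rw [div_mul_eq_mul_div, div_le_iff₀ hK0]
      nlinarith [norm_nonneg (f x - f x')]
end
end

section
/- Let X and Y be Banach spaces and let f: X → Y be a coarse Lipschitz map. Assume there exist A₀ > 0 and K ≥ 1 such that for every A ≥ A₀ and every maximal A-separated subset 𝓜 of X, the image f(𝓜) is a net in Y and (1/K)·‖x−x'‖ ≤ ‖f(x)−f(x')‖ ≤ K·‖x−x'‖ for all x, x' ∈ 𝓜. Then there exist continuous coarse Lipschitz maps φ: X → Y and ψ: Y → X and a constant C ≥ 0 such that ‖φ(x)−f(x)‖ ≤ C for all x ∈ X, ‖ψ(φ(x))−x‖ ≤ C for all x ∈ X, and ‖φ(ψ(y))−y‖ ≤ C for all y ∈ Y. -/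
open Metric Filter Topology Pointwise
open scoped ENNReal NNReal

noncomputable section

section AuxCL

variable {M N : Type*} [PseudoMetricSpace M] [PseudoMetricSpace N]

lemma coarseLipschitz_of_bound' (f : M → N) (L B : ℝ) (hB : 0 ≤ B)
    (hbd : ∀ x y, dist (f x) (f y) ≤ L * dist x y + B) : CoarseLipschitz f := by
  have h1 : lipS f 1 ≤ ENNReal.ofReal (L + B) := by
    refine iSup_le fun x => iSup_le fun y => iSup_le fun hd => ?_
    have hd0 : (0:ℝ) < dist x y := lt_of_lt_of_le one_pos hd
    refine ENNReal.ofReal_le_ofReal ?_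
    rw [div_le_iff₀ hd0]
    calc dist (f x) (f y) ≤ L * dist x y + B := hbd x y
      _ ≤ L * dist x y + B * dist x y := by nlinarith
      _ = (L + B) * dist x y := by ring
  have h2 : lipInfty f ≤ lipS f 1 :=
    iInf_le_of_le 1 (iInf_le_of_le one_pos le_rfl)
  exact lt_of_le_of_lt (h2.trans h1) ENNReal.ofReal_lt_top

lemma bound_of_coarseLipschitz' {X : Type*} [NormedAddCommGroup X] [NormedSpace ℝ X]
    (f : X → N) (hf : CoarseLipschitz f) :
    ∃ L B : ℝ, 0 ≤ L ∧ 0 ≤ B ∧ ∀ x y, dist (f x) (f y) ≤ L * dist x y + B := by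
  rw [CoarseLipschitz, lipInfty, iInf_lt_iff] at hf
  obtain ⟨s, hs⟩ := hf
  rw [iInf_lt_iff] at hs
  obtain ⟨hs0, hls⟩ := hs
  set L : ℝ := (lipS f s).toReal with hLdef
  have hL0 : 0 ≤ L := ENNReal.toReal_nonneg
  have key : ∀ x y : X, s ≤ dist x y → dist (f x) (f y) ≤ L * dist x y := by
    intro x y hd
    have hd0 : (0:ℝ) < dist x y := lt_of_lt_of_le hs0 hd
    have h1 : ENNReal.ofReal (dist (f x) (f y) / dist x y) ≤ lipS f s :=
      le_iSup_of_le x (le_iSup_of_le y (le_iSup_of_le hd le_rfl))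
    have h2 : dist (f x) (f y) / dist x y ≤ L :=
      (ENNReal.ofReal_le_iff_le_toReal hls.ne).mp h1
    calc dist (f x) (f y) = dist (f x) (f y) / dist x y * dist x y := by field_simp
      _ ≤ L * dist x y := by nlinarith
  by_cases htriv : ∀ x : X, x = 0
  · exact ⟨0, 0, le_rfl, le_rfl, fun x y => by rw [htriv x, htriv y]; simp⟩
  · push_neg at htriv
    obtain ⟨v, hv⟩ := htriv
    have hvn : (0:ℝ) < ‖v‖ := norm_pos_iff.mpr hv
    set u : X := ‖v‖⁻¹ • v with hu
    have hun : ‖u‖ = 1 := by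
      rw [hu, norm_smul, norm_inv, norm_norm]
      field_simp
    refine ⟨L, 4 * L * s, hL0, by positivity, fun x y => ?_⟩
    by_cases hd : s ≤ dist x y
    · have := key x y hd
      nlinarith [hs0.le, hL0]
    · push_neg at hd
      set z : X := x + (2 * s) • u with hz
      have hxz : dist x z = 2 * s := by
        rw [hz, dist_eq_norm]
        simp [norm_smul, hun]
        exact hs0.le
      have hsxz : s ≤ dist x z := by rw [hxz]; linarith
      have hsyz : s ≤ dist y z := by
        have h1 := dist_triangle x y z
        rw [hxz] at h1
        linarith
      calc dist (f x) (f y) ≤ dist (f x) (f z) + dist (f z) (f y) := dist_triangle _ _ _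
        _ ≤ L * dist x z + L * dist z y := by
            have h1 := key x z hsxz
            have h2 := key z y (by rwa [dist_comm])
            linarith
        _ ≤ L * (2*s) + L * (dist x y + 2*s) := by
            have h3 : dist z y ≤ dist x y + 2*s := by
              have := dist_triangle y x z
              rw [hxz, dist_comm y x] at this
              rw [dist_comm]
              linarith
            nlinarith [hxz]
        _ ≤ L * dist x y + 4 * L * s := by nlinarith

lemma exists_isMaxSep' (A : ℝ) : ∃ 𝓜 : Set M, IsMaxSep A 𝓜 := by
  have hz : ∀ c ⊆ {s : Set M | IsSep A s}, IsChain (· ⊆ ·) c →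
      ∃ ub ∈ {s : Set M | IsSep A s}, ∀ s ∈ c, s ⊆ ub := by
    intro c hc hchain
    refine ⟨⋃₀ c, fun x hx x' hx' hne => ?_, fun s hs => Set.subset_sUnion_of_mem hs⟩
    obtain ⟨s, hsc, hxs⟩ := hx
    obtain ⟨t, htc, hx't⟩ := hx'
    rcases hchain.total hsc htc with hst | hts
    · exact hc htc x (hst hxs) x' hx't hne
    · exact hc hsc x hxs x' (hts hx't) hne
  obtain ⟨m, hm⟩ := zorn_subset {s : Set M | IsSep A s} hz
  exact ⟨m, hm.1, fun t hmt ht => subset_antisymm (hm.2 ht hmt) hmt⟩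

lemma IsMaxSep.cover' {A : ℝ} (hA : 0 < A) {𝓜 : Set M} (h : IsMaxSep A 𝓜)
    (x : M) : ∃ m ∈ 𝓜, dist x m < A := by
  by_contra hcon
  push_neg at hcon
  have hx : x ∉ 𝓜 := fun hx => absurd (hcon x hx) (by simp [hA])
  have hsep : IsSep A (insert x 𝓜) := by
    intro z hz z' hz' hne
    rcases hz with rfl | hz
    · rcases hz' with rfl | hz'
      · exact absurd rfl hne
      · exact hcon z' hz'
    · rcases hz' with rfl | hz'
      · rw [dist_comm]; exact hcon z hz
      · exact h.1 z hz z' hz' hne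
  have := h.2 _ (Set.subset_insert x 𝓜) hsep
  exact hx (this ▸ Set.mem_insert x 𝓜)

lemma pou_estimate' {Z E ι : Type*} [TopologicalSpace Z] [NormedAddCommGroup E]
    [NormedSpace ℝ E] (ρ : PartitionOfUnity ι Z Set.univ) (c : ι → E) (z : Z) (e : E) (r : ℝ)
    (hr : ∀ i, ρ i z ≠ 0 → ‖c i - e‖ ≤ r) :
    ‖(∑ᶠ i, ρ i z • c i) - e‖ ≤ r := by
  have hfin : (Function.support fun i => ρ i z).Finite :=
    (ρ.locallyFinite.point_finite z).subset fun i hi => hi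
  set t := hfin.toFinset with ht
  have hsub : (Function.support fun i => ρ i z) ⊆ ↑t := by
    rw [ht, Set.Finite.coe_toFinset]
  have h1 := finsum_eq_sum_of_support_subset (fun i => ρ i z • c i)
      ((Function.support_smul_subset_left _ _).trans hsub)
  have h2 : ∑ i ∈ t, ρ i z = 1 := by
    rw [← finsum_eq_sum_of_support_subset _ hsub]
    exact ρ.sum_eq_one (Set.mem_univ z)
  rw [h1]
  have h3 : (∑ i ∈ t, ρ i z • c i) - e = ∑ i ∈ t, ρ i z • (c i - e) := by
    simp only [smul_sub, Finset.sum_sub_distrib, ← Finset.sum_smul, h2, one_smul]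
  rw [h3]
  calc ‖∑ i ∈ t, ρ i z • (c i - e)‖ ≤ ∑ i ∈ t, ‖ρ i z • (c i - e)‖ := norm_sum_le _ _
    _ ≤ ∑ i ∈ t, ρ i z * r := by
        refine Finset.sum_le_sum fun i hi => ?_
        rw [norm_smul, Real.norm_eq_abs, abs_of_nonneg (ρ.nonneg i z)]
        have hi' : ρ i z ≠ 0 := by
          simpa [Function.mem_support] using hfin.mem_toFinset.mp hi
        exact mul_le_mul_of_nonneg_left (hr i hi') (ρ.nonneg i z)
    _ = r := by rw [← Finset.sum_mul, h2, one_mul]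

lemma norm_sub_le₃' {E : Type*} [SeminormedAddCommGroup E] (a b c d : E) :
    ‖a - d‖ ≤ ‖a - b‖ + ‖b - c‖ + ‖c - d‖ := by
  simpa [dist_eq_norm] using dist_triangle4 a b c d

end AuxCL

set_option maxHeartbeats 1000000

/-- from the net condition one gets continuous coarse Lipschitz maps
`φ, ψ` with `φ` uniformly close to `f` and `ψ` a coarse inverse of `φ`. -/
theorem stmt2 {X Y : Type*} [NormedAddCommGroup X] [NormedSpace ℝ X] [CompleteSpace X]
    [NormedAddCommGroup Y] [NormedSpace ℝ Y] [CompleteSpace Y]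
    (f : X → Y) (hf : CoarseLipschitz f)
    (h : ∃ A₀ K : ℝ, 0 < A₀ ∧ 1 ≤ K ∧ ∀ A : ℝ, A₀ ≤ A → ∀ 𝓜 : Set X, IsMaxSep A 𝓜 →
      IsNet (f '' 𝓜) ∧ ∀ x ∈ 𝓜, ∀ x' ∈ 𝓜,
        (1 / K) * ‖x - x'‖ ≤ ‖f x - f x'‖ ∧ ‖f x - f x'‖ ≤ K * ‖x - x'‖) :
    ∃ (φ : X → Y) (ψ : Y → X) (C : ℝ), 0 ≤ C ∧
      Continuous φ ∧ Continuous ψ ∧ CoarseLipschitz φ ∧ CoarseLipschitz ψ ∧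
      (∀ x : X, ‖φ x - f x‖ ≤ C) ∧
      (∀ x : X, ‖ψ (φ x) - x‖ ≤ C) ∧ (∀ y : Y, ‖φ (ψ y) - y‖ ≤ C) := by
  classical
  obtain ⟨A₀, K, hA₀, hK, hmain⟩ := h
  obtain ⟨L, B, hL, hB, hfb⟩ := bound_of_coarseLipschitz' f hf
  have hK0 : (0:ℝ) < K := lt_of_lt_of_le one_pos hK
  obtain ⟨𝓜, hM⟩ := exists_isMaxSep' (M := X) A₀
  obtain ⟨hnet, hbl⟩ := hmain A₀ le_rfl 𝓜 hM
  obtain ⟨a, b, ha, hab, _hsep, hnetb⟩ := hnet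
  have hb0 : (0:ℝ) < b := lt_of_lt_of_le ha hab
  have hcov : ∀ x : X, ∃ m ∈ 𝓜, dist x m < A₀ := hM.cover' hA₀
  have hne : 𝓜.Nonempty := by
    obtain ⟨m, hm, _⟩ := hcov 0
    exact ⟨m, hm⟩
  -- partition of unity on X subordinate to balls of radius A₀ around net points
  obtain ⟨ρ, hρ⟩ := PartitionOfUnity.exists_isSubordinate (ι := 𝓜) isClosed_univ
      (fun m => Metric.ball (m : X) A₀) (fun m => Metric.isOpen_ball) (by
    intro x _
    obtain ⟨m, hm, hd⟩ := hcov x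
    exact Set.mem_iUnion.mpr ⟨⟨m, hm⟩, Metric.mem_ball.mpr hd⟩)
  set φ : X → Y := fun x => ∑ᶠ m : 𝓜, ρ m x • f (m : X) with hφdef
  have hφc : Continuous φ := ρ.continuous_finsum_smul (fun i x _ => continuousAt_const)
  have hρs : ∀ (i : 𝓜) (x : X), ρ i x ≠ 0 → dist x (i : X) < A₀ := by
    intro i x hx
    have h1 : x ∈ tsupport (ρ i) := subset_closure hx
    exact Metric.mem_ball.mp (hρ i h1)
  -- partition of unity on Y
  have hneY : (f '' 𝓜).Nonempty := hne.image f
  have hcovY : ∀ y : Y, ∃ m ∈ 𝓜, dist y (f m) < b := by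
    intro y
    obtain ⟨z, hz, hd⟩ := (Metric.infDist_lt_iff hneY).mp (hnetb y)
    obtain ⟨m, hm, rfl⟩ := hz
    exact ⟨m, hm, hd⟩
  obtain ⟨σ, hσ⟩ := PartitionOfUnity.exists_isSubordinate (ι := 𝓜) isClosed_univ
      (fun m => Metric.ball (f (m : X)) b) (fun m => Metric.isOpen_ball) (by
    intro y _
    obtain ⟨m, hm, hd⟩ := hcovY y
    exact Set.mem_iUnion.mpr ⟨⟨m, hm⟩, Metric.mem_ball.mpr hd⟩)
  set ψ : Y → X := fun y => ∑ᶠ m : 𝓜, σ m y • (m : X) with hψdef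
  have hψc : Continuous ψ := σ.continuous_finsum_smul (fun i x _ => continuousAt_const)
  have hσs : ∀ (i : 𝓜) (y : Y), σ i y ≠ 0 → dist y (f (i : X)) < b := by
    intro i y hy
    have h1 : y ∈ tsupport (σ i) := subset_closure hy
    exact Metric.mem_ball.mp (hσ i h1)
  -- constants
  set C₁ : ℝ := K * (2 * A₀) + (L * A₀ + B) with hC₁def
  have hC₁0 : 0 ≤ C₁ := by positivity
  -- (1) φ is close to f on net neighborhoods
  have hφnear : ∀ (x : X) (m : X), m ∈ 𝓜 → dist x m < A₀ → ‖φ x - f m‖ ≤ K * (2 * A₀) := by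
    intro x m hm hd
    refine pou_estimate' ρ (fun i => f (i : X)) x (f m) _ ?_
    intro i hi
    have h1 : dist x (i : X) < A₀ := hρs i x hi
    have h2 : ‖(i : X) - m‖ ≤ 2 * A₀ := by
      rw [← dist_eq_norm]
      calc dist (i : X) m ≤ dist (i : X) x + dist x m := dist_triangle _ _ _
        _ ≤ 2 * A₀ := by rw [dist_comm (i : X) x]; linarith
    have h3 := (hbl (i : X) i.2 m hm).2
    calc ‖f (i : X) - f m‖ ≤ K * ‖(i : X) - m‖ := h3
      _ ≤ K * (2 * A₀) := by nlinarith
  -- (2) φ is uniformly close to f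
  have hφf : ∀ x : X, ‖φ x - f x‖ ≤ C₁ := by
    intro x
    obtain ⟨m, hm, hd⟩ := hcov x
    have h1 := hφnear x m hm hd
    have h2 : ‖f m - f x‖ ≤ L * A₀ + B := by
      rw [← dist_eq_norm]
      have := hfb m x
      rw [dist_comm m x] at this
      nlinarith
    calc ‖φ x - f x‖ ≤ ‖φ x - f m‖ + ‖f m - f x‖ := norm_sub_le_norm_sub_add_norm_sub _ _ _
      _ ≤ C₁ := by rw [hC₁def]; linarith
  -- (3) ψ lands near net points
  have hψnear : ∀ y : Y, ∃ m ∈ 𝓜, dist y (f m) < b ∧ ‖ψ y - m‖ ≤ K * (2 * b) := by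
    intro y
    obtain ⟨m, hm, hd⟩ := hcovY y
    refine ⟨m, hm, hd, ?_⟩
    refine pou_estimate' σ (fun i => (i : X)) y m _ ?_
    intro i hi
    have h1 : dist y (f (i : X)) < b := hσs i y hi
    have h2 : ‖f (i : X) - f m‖ ≤ 2 * b := by
      rw [← dist_eq_norm]
      calc dist (f (i : X)) (f m) ≤ dist (f (i : X)) y + dist y (f m) := dist_triangle _ _ _
        _ ≤ 2 * b := by rw [dist_comm (f (i : X)) y]; linarith
    have h3 := (hbl (i : X) i.2 m hm).1
    have h4 : (1 / K) * ‖(i : X) - m‖ ≤ 2 * b := le_trans h3 h2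
    rw [div_mul_eq_mul_div, one_mul, div_le_iff₀ hK0] at h4
    linarith [h4]
  -- φ coarse Lipschitz
  have hφcl : CoarseLipschitz φ := by
    refine coarseLipschitz_of_bound' φ L (B + 2 * C₁) (by linarith) ?_
    intro x y
    have h1 := hφf x
    have h2 := hφf y
    have h3 := hfb x y
    simp only [dist_eq_norm] at h3 ⊢
    have h4 : ‖φ x - φ y‖ ≤ ‖φ x - f x‖ + ‖f x - f y‖ + ‖f y - φ y‖ :=
      norm_sub_le₃' _ _ _ _
    have h5 : ‖f y - φ y‖ = ‖φ y - f y‖ := norm_sub_rev _ _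
    linarith
  -- ψ coarse Lipschitz
  have hψcl : CoarseLipschitz ψ := by
    refine coarseLipschitz_of_bound' ψ K (6 * K * b) (by positivity) ?_
    intro y y'
    obtain ⟨m, hm, hd, hψm⟩ := hψnear y
    obtain ⟨m', hm', hd', hψm'⟩ := hψnear y'
    have h1 := (hbl m hm m' hm').1
    have h2 : ‖f m - f m'‖ ≤ dist y y' + 2 * b := by
      rw [← dist_eq_norm]
      calc dist (f m) (f m') ≤ dist (f m) y + dist y (f m') := dist_triangle _ _ _
        _ ≤ dist (f m) y + (dist y y' + dist y' (f m')) := by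
            linarith [dist_triangle y y' (f m')]
        _ ≤ dist y y' + 2 * b := by
            linarith [hd.le, hd'.le, dist_comm (f m) y, dist_comm y' (f m')]
    have h3 : ‖m - m'‖ ≤ K * (dist y y' + 2 * b) := by
      have h4 : (1 / K) * ‖m - m'‖ ≤ dist y y' + 2 * b := le_trans h1 h2
      rw [div_mul_eq_mul_div, one_mul, div_le_iff₀ hK0] at h4
      nlinarith
    rw [dist_eq_norm]
    have h6 : ‖ψ y - ψ y'‖ ≤ ‖ψ y - m‖ + ‖m - m'‖ + ‖m' - ψ y'‖ := norm_sub_le₃' _ _ _ _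
    have h7 : ‖m' - ψ y'‖ = ‖ψ y' - m'‖ := norm_sub_rev _ _
    linarith
  -- (6) ψ ∘ φ close to id
  set C₂ : ℝ := K * (2 * b) + K * (b + C₁ + (L * A₀ + B)) + A₀ with hC₂def
  have hC₂0 : 0 ≤ C₂ := by positivity
  have hψφ : ∀ x : X, ‖ψ (φ x) - x‖ ≤ C₂ := by
    intro x
    obtain ⟨m, hm, hd, hψm⟩ := hψnear (φ x)
    obtain ⟨m₁, hm₁, hd₁⟩ := hcov x
    have h1 : ‖f m - f m₁‖ ≤ b + C₁ + (L * A₀ + B) := by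
      have ha1 : ‖f m - φ x‖ ≤ b := by
        rw [← dist_eq_norm, dist_comm]
        exact hd.le
      have ha2 : ‖φ x - f x‖ ≤ C₁ := hφf x
      have ha3 : ‖f x - f m₁‖ ≤ L * A₀ + B := by
        rw [← dist_eq_norm]
        have := hfb x m₁
        nlinarith
      have hb1 : ‖f m - f m₁‖ ≤ ‖f m - φ x‖ + ‖φ x - f x‖ + ‖f x - f m₁‖ :=
        norm_sub_le₃' _ _ _ _
      linarith
    have h2 : ‖m - m₁‖ ≤ K * (b + C₁ + (L * A₀ + B)) := by
      have h3 := (hbl m hm m₁ hm₁).1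
      have h4 : (1 / K) * ‖m - m₁‖ ≤ b + C₁ + (L * A₀ + B) := le_trans h3 h1
      rw [div_mul_eq_mul_div, one_mul, div_le_iff₀ hK0] at h4
      nlinarith
    have h5 : ‖m₁ - x‖ ≤ A₀ := by
      rw [← dist_eq_norm, dist_comm]
      exact hd₁.le
    have h6 : ‖ψ (φ x) - x‖ ≤ ‖ψ (φ x) - m‖ + ‖m - m₁‖ + ‖m₁ - x‖ := norm_sub_le₃' _ _ _ _
    rw [hC₂def]
    linarith
  -- (7) φ ∘ ψ close to id
  set C₃ : ℝ := C₁ + (L * (K * (2 * b)) + B) + b with hC₃def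
  have hC₃0 : 0 ≤ C₃ := by positivity
  have hφψ : ∀ y : Y, ‖φ (ψ y) - y‖ ≤ C₃ := by
    intro y
    obtain ⟨m, hm, hd, hψm⟩ := hψnear y
    have h1 : ‖φ (ψ y) - f (ψ y)‖ ≤ C₁ := hφf (ψ y)
    have h2 : ‖f (ψ y) - f m‖ ≤ L * (K * (2 * b)) + B := by
      rw [← dist_eq_norm]
      have h3 := hfb (ψ y) m
      have h4 : dist (ψ y) m ≤ K * (2 * b) := by
        rw [dist_eq_norm]; exact hψm
      nlinarith
    have h5 : ‖f m - y‖ ≤ b := by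
      rw [← dist_eq_norm, dist_comm]
      exact hd.le
    have h6 : ‖φ (ψ y) - y‖ ≤ ‖φ (ψ y) - f (ψ y)‖ + ‖f (ψ y) - f m‖ + ‖f m - y‖ :=
      norm_sub_le₃' _ _ _ _
    rw [hC₃def]
    linarith
  refine ⟨φ, ψ, max C₁ (max C₂ C₃), le_trans hC₁0 (le_max_left _ _), hφc, hψc, hφcl, hψcl,
    fun x => le_trans (hφf x) (le_max_left _ _),
    fun x => le_trans (hψφ x) (le_trans (le_max_left _ _) (le_max_right _ _)),
    fun y => le_trans (hφψ y) (le_trans (le_max_right _ _) (le_max_right _ _))⟩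
end
end

section
/- Let X and Y be Banach spaces and let 𝓜 be a net in X such that every Lipschitz map from 𝓜 to Y admits a Lipschitz extension from X to Y. Then there exists λ ≥ 1 such that every Lipschitz map f: 𝓜 → Y admits a Lipschitz extension g: X → Y with Lip(g) ≤ λ·Lip(f). -/
open Metric Filter Topology Pointwise
open scoped ENNReal NNReal

noncomputable section

set_option linter.unusedSectionVars false
set_option maxHeartbeats 1000000
set_option synthInstance.maxHeartbeats 400000

instance factOneLeInftyEnnreal : Fact ((1 : ℝ≥0∞) ≤ ∞) := ⟨le_top⟩

section Aux

variable {X Y : Type*} [NormedAddCommGroup X] [NormedSpace ℝ X]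
  [NormedAddCommGroup Y] [NormedSpace ℝ Y]

/-- ambient `ℓ∞` space indexed by pairs of points of `𝓜`. -/
abbrev WW (Y : Type*) [NormedAddCommGroup Y] {X : Type*} [NormedAddCommGroup X]
    (𝓜 : Set X) : Type _ :=
  lp (fun _ : ↥𝓜 × ↥𝓜 => Y) ∞

variable {𝓜 : Set X}

theorem lipschitz_eval (p : ↥𝓜 × ↥𝓜) :
    LipschitzWith 1 (fun w : WW Y 𝓜 => w p) :=
  LipschitzWith.of_dist_le_mul fun w v => by
    simp only [dist_eq_norm, NNReal.coe_one, one_mul]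
    calc ‖w p - v p‖ = ‖(w - v) p‖ := by rw [lp.coeFn_sub]; rfl
    _ ≤ ‖w - v‖ := lp.norm_apply_le_norm ENNReal.top_ne_zero _ _

/-- decoding a function from its matrix of difference quotients. -/
def fw (m0 : ↥𝓜) (w : WW Y 𝓜) (z : ↥𝓜) : Y := (dist z m0 : ℝ) • w (z, m0)

/-- the closed subspace of `WW` consisting of codes of Lipschitz functions
vanishing at `m0`. -/
def PP (m0 : ↥𝓜) : Set (WW Y 𝓜) :=
  {w | ∀ p : ↥𝓜 × ↥𝓜, w p = (dist p.1 p.2)⁻¹ •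
    ((dist p.1 m0 : ℝ) • w (p.1, m0) - (dist p.2 m0 : ℝ) • w (p.2, m0))}

theorem fw_m0 (m0 : ↥𝓜) (w : WW Y 𝓜) : fw m0 w m0 = 0 := by
  show (dist m0 m0 : ℝ) • w (m0, m0) = 0
  rw [dist_self, zero_smul]

theorem fw_sub (m0 : ↥𝓜) (w v : WW Y 𝓜) (z : ↥𝓜) :
    fw m0 (w - v) z = fw m0 w z - fw m0 v z := by
  simp only [fw, lp.coeFn_sub, Pi.sub_apply, smul_sub]

theorem fw_smul (m0 : ↥𝓜) (c : ℝ) (w : WW Y 𝓜) (z : ↥𝓜) :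
    fw m0 (c • w) z = c • fw m0 w z := by
  show (dist z m0 : ℝ) • ((c • w) (z, m0)) = c • ((dist z m0 : ℝ) • w (z, m0))
  rw [lp.coeFn_smul, Pi.smul_apply, smul_comm]

theorem PP.zero (m0 : ↥𝓜) : (0 : WW Y 𝓜) ∈ PP m0 := by
  intro p
  simp [lp.coeFn_zero]

theorem PP.add {m0 : ↥𝓜} {w v : WW Y 𝓜} (hw : w ∈ PP m0) (hv : v ∈ PP m0) :
    w + v ∈ PP m0 := by
  intro p
  simp only [lp.coeFn_add, Pi.add_apply]
  rw [hw p, hv p]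
  module

theorem PP.sub {m0 : ↥𝓜} {w v : WW Y 𝓜} (hw : w ∈ PP m0) (hv : v ∈ PP m0) :
    w - v ∈ PP m0 := by
  intro p
  simp only [lp.coeFn_sub, Pi.sub_apply]
  rw [hw p, hv p]
  module

theorem PP.smul {m0 : ↥𝓜} {w : WW Y 𝓜} (c : ℝ) (hw : w ∈ PP m0) :
    c • w ∈ PP m0 := by
  intro p
  simp only [lp.coeFn_smul, Pi.smul_apply]
  rw [hw p]
  module

theorem PP.fw_sub_fw {m0 : ↥𝓜} {w : WW Y 𝓜} (hw : w ∈ PP m0) (z z' : ↥𝓜) :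
    fw m0 w z - fw m0 w z' = (dist z z' : ℝ) • w (z, z') := by
  rcases eq_or_ne z z' with rfl | hne
  · simp
  · have hd : (dist z z' : ℝ) ≠ 0 := ne_of_gt (dist_pos.2 hne)
    calc fw m0 w z - fw m0 w z'
        = (dist z z') • (dist z z')⁻¹ •
          ((dist z m0 : ℝ) • w (z, m0) - (dist z' m0 : ℝ) • w (z', m0)) := by
          rw [smul_smul, mul_inv_cancel₀ hd, one_smul]; rfl
      _ = (dist z z' : ℝ) • w (z, z') := by rw [← hw (z, z')]

theorem PP.lipschitz_fw {m0 : ↥𝓜} {w : WW Y 𝓜} (hw : w ∈ PP m0) :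
    LipschitzWith ‖w‖₊ (fw m0 w) :=
  LipschitzWith.of_dist_le_mul fun z z' => by
    rw [dist_eq_norm, PP.fw_sub_fw hw z z', norm_smul, Real.norm_eq_abs,
      abs_of_nonneg dist_nonneg]
    calc dist z z' * ‖w (z, z')‖ ≤ dist z z' * ‖w‖ := by
          exact mul_le_mul_of_nonneg_left
            (lp.norm_apply_le_norm ENNReal.top_ne_zero w (z, z')) dist_nonneg
      _ = (‖w‖₊ : ℝ) * dist z z' := by rw [coe_nnnorm, mul_comm]

theorem isClosed_PP (m0 : ↥𝓜) : IsClosed (PP (Y := Y) m0) := by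
  have : PP (Y := Y) m0 = ⋂ p : ↥𝓜 × ↥𝓜, {w : WW Y 𝓜 | w p = (dist p.1 p.2)⁻¹ •
      ((dist p.1 m0 : ℝ) • w (p.1, m0) - (dist p.2 m0 : ℝ) • w (p.2, m0))} := by
    ext w; simp [PP, Set.mem_iInter]
  rw [this]
  refine isClosed_iInter fun p => isClosed_eq (lipschitz_eval p).continuous ?_
  exact ((((lipschitz_eval (p.1, m0)).continuous.const_smul _).sub
    ((lipschitz_eval (p.2, m0)).continuous.const_smul _)).const_smul _)

/-- encoding a Lipschitz function vanishing at `m0` as an element of `PP m0`. -/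
theorem exists_TW {m0 : ↥𝓜} {f : ↥𝓜 → Y} {K : ℝ≥0} (hf : LipschitzWith K f)
    (hf0 : f m0 = 0) :
    ∃ w : WW Y 𝓜, w ∈ PP m0 ∧ fw m0 w = f ∧ ‖w‖ ≤ K := by
  set Tf : ↥𝓜 × ↥𝓜 → Y := fun p => (dist p.1 p.2 : ℝ)⁻¹ • (f p.1 - f p.2) with hTf
  have bound : ∀ p : ↥𝓜 × ↥𝓜, ‖Tf p‖ ≤ K := by
    intro p
    rcases eq_or_ne p.1 p.2 with h | h
    · simp [hTf, h]
    · have hd : (0 : ℝ) < dist p.1 p.2 := dist_pos.2 h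
      rw [hTf]
      simp only
      rw [norm_smul, Real.norm_eq_abs, abs_inv, abs_of_nonneg dist_nonneg, ← dist_eq_norm]
      calc (dist p.1 p.2)⁻¹ * dist (f p.1) (f p.2)
          ≤ (dist p.1 p.2)⁻¹ * ((K : ℝ) * dist p.1 p.2) :=
            mul_le_mul_of_nonneg_left (hf.dist_le_mul p.1 p.2) (inv_nonneg.2 dist_nonneg)
        _ = K := by field_simp
  have hmem : Memℓp Tf ∞ := memℓp_infty ⟨(K : ℝ), by rintro x ⟨p, rfl⟩; exact bound p⟩
  set w : WW Y 𝓜 := ⟨Tf, hmem⟩ with hw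
  have happly : ∀ p, w p = Tf p := fun p => rfl
  have key : ∀ z : ↥𝓜, (dist z m0 : ℝ) • w (z, m0) = f z := by
    intro z
    rcases eq_or_ne z m0 with rfl | hne
    · simp [hf0]
    · have hd : (dist z m0 : ℝ) ≠ 0 := ne_of_gt (dist_pos.2 hne)
      rw [happly, hTf]
      simp only
      rw [smul_smul, mul_inv_cancel₀ hd, one_smul, hf0, sub_zero]
  refine ⟨w, ?_, ?_, ?_⟩
  · intro p
    rw [key p.1, key p.2, happly]
  · funext z
    exact key z
  · exact lp.norm_le_of_forall_le K.coe_nonneg fun p => bound p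

/-- the set of codes of functions admitting a `c`-Lipschitz extension. -/
def EE (m0 : ↥𝓜) (c : ℝ≥0) : Set (WW Y 𝓜) :=
  {w | w ∈ PP m0 ∧ ∃ g : X → Y, LipschitzWith c g ∧ ∀ z : ↥𝓜, g (z : X) = fw m0 w z}

theorem EE.sub {m0 : ↥𝓜} {w v : WW Y 𝓜} {c c' : ℝ≥0}
    (hw : w ∈ EE m0 c) (hv : v ∈ EE m0 c') : w - v ∈ EE m0 (c + c') := by
  obtain ⟨hwP, gw, hgw, hgw'⟩ := hw
  obtain ⟨hvP, gv, hgv, hgv'⟩ := hv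
  refine ⟨PP.sub hwP hvP, fun x => gw x - gv x, hgw.sub hgv, fun z => ?_⟩
  show gw (z : X) - gv (z : X) = fw m0 (w - v) z
  rw [fw_sub, hgw' z, hgv' z]

theorem EE.smul {m0 : ↥𝓜} {w : WW Y 𝓜} {c' : ℝ≥0} (c : ℝ≥0)
    (hw : w ∈ EE m0 c') : (c : ℝ) • w ∈ EE m0 (c * c') := by
  obtain ⟨hwP, g, hg, hg'⟩ := hw
  refine ⟨PP.smul _ hwP, fun x => (c : ℝ) • g x, ?_, fun z => ?_⟩
  · refine LipschitzWith.of_dist_le_mul fun x y => ?_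
    rw [dist_smul₀]
    calc ‖(c : ℝ)‖ * dist (g x) (g y) ≤ (c : ℝ) * ((c' : ℝ) * dist x y) := by
          rw [Real.norm_eq_abs, abs_of_nonneg c.coe_nonneg]
          exact mul_le_mul_of_nonneg_left (hg.dist_le_mul x y) c.coe_nonneg
      _ = ((c * c' : ℝ≥0) : ℝ) * dist x y := by push_cast; ring
  · show (c : ℝ) • g (z : X) = fw m0 ((c : ℝ) • w) z
    rw [fw_smul, hg' z]

end Aux

/-- dependent-choice style recursion helper. -/
theorem seq_of_step {α : Type*} (Q : ℕ → α → Prop) (R : ℕ → α → α → Prop) (a0 : α)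
    (h0 : Q 0 a0) (hstep : ∀ k a, Q k a → ∃ b, Q (k + 1) b ∧ R k a b) :
    ∃ u : ℕ → α, u 0 = a0 ∧ (∀ k, Q k (u k)) ∧ ∀ k, R k (u k) (u (k + 1)) := by
  classical
  choose! f hf1 hf2 using hstep
  refine ⟨fun k => Nat.rec a0 (fun k a => f k a) k, rfl, ?_, ?_⟩
  · intro k
    induction k with
    | zero => exact h0
    | succ k ih => exact hf1 k _ ih
  · intro k
    have hQ : ∀ j, Q j (Nat.rec a0 (fun k a => f k a) j : α) := by
      intro j
      induction j with
      | zero => exact h0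
      | succ j ih => exact hf1 j _ ih
    exact hf2 k _ (hQ k)

/-- uniformity of the Lipschitz constant of extensions from a net. -/
theorem stmt4 {X Y : Type*} [NormedAddCommGroup X] [NormedSpace ℝ X] [CompleteSpace X]
    [NormedAddCommGroup Y] [NormedSpace ℝ Y] [CompleteSpace Y]
    (𝓜 : Set X) (hnet : IsNet 𝓜)
    (hext : ∀ (f : 𝓜 → Y) (K : ℝ≥0), LipschitzWith K f →
      ∃ (g : X → Y) (K' : ℝ≥0), LipschitzWith K' g ∧ ∀ m : 𝓜, g (m : X) = f m) :
    ∃ lam : ℝ≥0, 1 ≤ lam ∧ ∀ (f : 𝓜 → Y) (K : ℝ≥0), LipschitzWith K f →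
      ∃ g : X → Y, LipschitzWith (lam * K) g ∧ ∀ m : 𝓜, g (m : X) = f m := by
  classical
  rcases isEmpty_or_nonempty ↥𝓜 with hM | hM
  · refine ⟨1, le_refl 1, fun f K hf => ⟨fun _ => 0, ?_, fun m => isEmptyElim m⟩⟩
    exact (LipschitzWith.const 0).weaken zero_le
  obtain ⟨m0⟩ := hM
  haveI : Nonempty ↥(PP (Y := Y) m0) := ⟨⟨0, PP.zero m0⟩⟩
  haveI : CompleteSpace ↥(PP (Y := Y) m0) := (isClosed_PP m0).completeSpace_coe
  have hcover : ∀ w ∈ PP (Y := Y) m0, ∃ k : ℕ, w ∈ EE m0 (k : ℝ≥0) := by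
    intro w hw
    obtain ⟨g, K', hg, hg'⟩ := hext (fw m0 w) ‖w‖₊ (PP.lipschitz_fw hw)
    exact ⟨⌈K'⌉₊, hw, g, hg.weaken (Nat.le_ceil K'), hg'⟩
  obtain ⟨n, w0mem⟩ := nonempty_interior_of_iUnion_of_closed
    (f := fun k : ℕ =>
      (Subtype.val ⁻¹' closure (EE (Y := Y) m0 (k : ℝ≥0)) : Set ↥(PP (Y := Y) m0)))
    (fun k => (isClosed_closure).preimage continuous_subtype_val)
    (by
      rw [Set.eq_univ_iff_forall]
      rintro ⟨w, hw⟩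
      obtain ⟨k, hk⟩ := hcover w hw
      exact Set.mem_iUnion.2 ⟨k, subset_closure hk⟩)
  obtain ⟨w0, hw0⟩ := w0mem
  rw [mem_interior_iff_mem_nhds, Metric.mem_nhds_iff] at hw0
  obtain ⟨ε, hε, hball⟩ := hw0
  set N : ℝ≥0 := (n : ℝ≥0) + (n : ℝ≥0) with hN
  have hNR : (0:ℝ) ≤ (N : ℝ) := N.coe_nonneg
  have hclose : ∀ w, w ∈ PP (Y := Y) m0 → ‖w - (w0 : WW Y 𝓜)‖ < ε →
      w ∈ closure (EE m0 (n : ℝ≥0)) := by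
    intro w hw hd
    have : (⟨w, hw⟩ : ↥(PP (Y := Y) m0)) ∈ Metric.ball w0 ε := by
      rw [mem_ball, Subtype.dist_eq, dist_eq_norm]; exact hd
    exact hball this
  have hA : ∀ h, h ∈ PP (Y := Y) m0 → ‖h‖ < ε → h ∈ closure (EE m0 N) := by
    intro h hh hlt
    have h1 : (w0 : WW Y 𝓜) + h ∈ closure (EE m0 (n : ℝ≥0)) :=
      hclose _ (PP.add w0.2 hh) (by rwa [add_sub_cancel_left])
    have h2 : (w0 : WW Y 𝓜) ∈ closure (EE m0 (n : ℝ≥0)) :=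
      hclose _ w0.2 (by simpa using hε)
    obtain ⟨uu, hu1, hu2⟩ := mem_closure_iff_seq_limit.1 h1
    obtain ⟨vv, hv1, hv2⟩ := mem_closure_iff_seq_limit.1 h2
    refine mem_closure_iff_seq_limit.2
      ⟨fun k => uu k - vv k, fun k => EE.sub (hu1 k) (hv1 k), ?_⟩
    simpa using hu2.sub hv2
  have hB : ∀ t : ℝ≥0, 0 < t → ∀ h, h ∈ PP (Y := Y) m0 → ‖h‖ < ε * (t : ℝ) →
      h ∈ closure (EE m0 (t * N)) := by
    intro t ht h hh hlt
    have htR : (0:ℝ) < (t : ℝ) := ht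
    have hmem : (t : ℝ)⁻¹ • h ∈ closure (EE m0 N) := by
      refine hA _ (PP.smul _ hh) ?_
      rw [norm_smul, Real.norm_eq_abs, abs_inv, abs_of_nonneg t.coe_nonneg]
      calc (t:ℝ)⁻¹ * ‖h‖ < (t:ℝ)⁻¹ * (ε * t) :=
            mul_lt_mul_of_pos_left hlt (inv_pos.2 htR)
        _ = ε := by field_simp
    obtain ⟨uu, hu1, hu2⟩ := mem_closure_iff_seq_limit.1 hmem
    refine mem_closure_iff_seq_limit.2
      ⟨fun k => (t : ℝ) • uu k, fun k => EE.smul t (hu1 k), ?_⟩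
    have := hu2.const_smul (t : ℝ)
    simpa [smul_smul, mul_inv_cancel₀ (ne_of_gt htR)] using this
  refine ⟨1 + Real.toNNReal (4 * (N : ℝ) / ε), le_self_add, fun f K hf => ?_⟩
  rcases eq_or_ne K 0 with rfl | hK0
  · refine ⟨fun _ => f m0, ?_, fun m => ?_⟩
    · rw [mul_zero]
      exact LipschitzWith.const' (f m0)
    · have hd : dist (f m) (f m0) ≤ 0 := by simpa using hf.dist_le_mul m m0
      exact (dist_le_zero.1 hd).symm
  have hKpos : (0:ℝ) < (K : ℝ) := NNReal.coe_pos.2 (zero_lt_iff.2 hK0)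
  set c : ℝ := ε / (2 * K) with hc
  have hcpos : 0 < c := by positivity
  have hεhalf : (0:ℝ) ≤ ε / 2 := by positivity
  set ft : ↥𝓜 → Y := fun z => c • (f z - f m0) with hft
  have hft0 : ft m0 = 0 := by simp [hft]
  have hftLip : LipschitzWith (Real.toNNReal (ε / 2)) ft := by
    refine LipschitzWith.of_dist_le_mul fun z z' => ?_
    have hdiff : ft z - ft z' = c • (f z - f z') := by
      rw [hft]; simp only; rw [← smul_sub]; congr 1; abel
    rw [dist_eq_norm, hdiff, norm_smul, Real.norm_eq_abs, abs_of_pos hcpos, ← dist_eq_norm]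
    calc c * dist (f z) (f z') ≤ c * ((K:ℝ) * dist z z') :=
          mul_le_mul_of_nonneg_left (hf.dist_le_mul _ _) hcpos.le
      _ = (ε / 2) * dist z z' := by rw [hc]; field_simp
      _ = (Real.toNNReal (ε/2) : ℝ) * dist z z' := by
          rw [Real.coe_toNNReal _ hεhalf]
  obtain ⟨h, hhP, hhfw, hhnorm⟩ := exists_TW hftLip hft0
  have hhnorm' : ‖h‖ ≤ ε / 2 := by rwa [Real.coe_toNNReal _ hεhalf] at hhnorm
  have hh0 : ‖h‖ < ε * (((2:ℝ≥0)⁻¹ ^ (0:ℕ) : ℝ≥0) : ℝ) := by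
    rw [pow_zero]
    push_cast
    linarith
  obtain ⟨u, hu0, hQ, hR⟩ := seq_of_step
    (fun k r => r ∈ PP (Y := Y) m0 ∧ ‖r‖ < ε * (((2:ℝ≥0)⁻¹ ^ k : ℝ≥0) : ℝ))
    (fun k r r' => r - r' ∈ EE m0 ((2:ℝ≥0)⁻¹ ^ k * N)) h ⟨hhP, hh0⟩ (by
      rintro k r ⟨hrP, hrlt⟩
      have ht : (0:ℝ≥0) < (2:ℝ≥0)⁻¹ ^ k := pow_pos (by norm_num) k
      have hcl := hB _ ht r hrP hrlt
      have hpos : (0:ℝ) < ε * (((2:ℝ≥0)⁻¹ ^ (k+1) : ℝ≥0) : ℝ) := by positivity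
      obtain ⟨w, hwE, hwd⟩ := Metric.mem_closure_iff.1 hcl _ hpos
      refine ⟨r - w, ⟨PP.sub hrP hwE.1, ?_⟩, ?_⟩
      · rwa [dist_eq_norm] at hwd
      · show r - (r - w) ∈ EE m0 ((2:ℝ≥0)⁻¹ ^ k * N)
        rw [sub_sub_cancel]
        exact hwE)
  have hRE : ∀ k, u k - u (k+1) ∈ EE m0 ((2:ℝ≥0)⁻¹ ^ k * N) := hR
  choose g hgLip hgMatch using fun k => (hRE k).2
  have hg0 : ∀ k, g k (m0 : X) = 0 := fun k => by rw [hgMatch k m0, fw_m0]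
  have hgd : ∀ (k : ℕ) (x y : X), ‖g k x - g k y‖ ≤ (1/2:ℝ)^k * ((N:ℝ) * ‖x - y‖) := by
    intro k x y
    have h1 := (hgLip k).dist_le_mul x y
    rw [dist_eq_norm, dist_eq_norm] at h1
    calc ‖g k x - g k y‖ ≤ (((2:ℝ≥0)⁻¹ ^ k * N : ℝ≥0) : ℝ) * ‖x - y‖ := h1
      _ = (1/2:ℝ)^k * ((N:ℝ) * ‖x - y‖) := by push_cast; ring
  have hgb : ∀ (k : ℕ) (x : X), ‖g k x‖ ≤ (1/2:ℝ)^k * ((N:ℝ) * ‖x - (m0 : X)‖) := by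
    intro k x
    have := hgd k x (m0 : X)
    rwa [hg0 k, sub_zero] at this
  have hsum : ∀ x : X, Summable fun k => g k x := fun x =>
    Summable.of_norm_bounded (summable_geometric_two.mul_right _) (fun k => hgb k x)
  set G : X → Y := fun x => ∑' k, g k x with hG
  have hsumnorm : ∀ x y : X, Summable fun k => ‖g k x - g k y‖ := fun x y =>
    Summable.of_nonneg_of_le (fun k => norm_nonneg _) (fun k => hgd k x y)
      (summable_geometric_two.mul_right _)
  have hGdiff : ∀ x y : X, ‖G x - G y‖ ≤ 2 * ((N:ℝ) * ‖x - y‖) := by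
    intro x y
    have hGxy : G x - G y = ∑' k, (g k x - g k y) := (Summable.tsum_sub (hsum x) (hsum y)).symm
    rw [hGxy]
    calc ‖∑' k, (g k x - g k y)‖ ≤ ∑' k, ‖g k x - g k y‖ :=
          norm_tsum_le_tsum_norm (hsumnorm x y)
      _ ≤ ∑' k, (1/2:ℝ)^k * ((N:ℝ) * ‖x - y‖) :=
          Summable.tsum_le_tsum (fun k => hgd k x y) (hsumnorm x y)
            (summable_geometric_two.mul_right _)
      _ = 2 * ((N:ℝ) * ‖x - y‖) := by rw [tsum_mul_right, tsum_geometric_two]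
  have hGz : ∀ z : ↥𝓜, G (z : X) = fw m0 h z := by
    intro z
    have hpart : ∀ KK : ℕ, ∑ j ∈ Finset.range KK, g j (z : X)
        = fw m0 h z - fw m0 (u KK) z := by
      intro KK
      have hterm : ∀ j, g j (z : X) = fw m0 (u j) z - fw m0 (u (j+1)) z := fun j => by
        rw [hgMatch j z, fw_sub]
      rw [Finset.sum_congr rfl (fun j _ => hterm j), Finset.sum_range_sub'
        (fun j => fw m0 (u j) z), hu0]
    have hlim : Tendsto (fun KK => fw m0 (u KK) z) atTop (𝓝 0) := by
      rw [tendsto_zero_iff_norm_tendsto_zero]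
      refine squeeze_zero (g := fun KK => (ε * (1/2:ℝ)^KK) * dist z m0)
        (fun _ => norm_nonneg _) (fun KK => ?_) ?_
      · have h1 : ‖fw m0 (u KK) z‖ = dist (fw m0 (u KK) z) (fw m0 (u KK) m0) := by
          rw [fw_m0, dist_eq_norm, sub_zero]
        rw [h1]
        calc dist (fw m0 (u KK) z) (fw m0 (u KK) m0) ≤ ‖u KK‖ * dist z m0 := by
              have h2 := (PP.lipschitz_fw (hQ KK).1).dist_le_mul z m0
              rwa [coe_nnnorm] at h2
          _ ≤ (ε * (1/2:ℝ)^KK) * dist z m0 := by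
              refine mul_le_mul_of_nonneg_right (le_of_lt ?_) dist_nonneg
              refine lt_of_lt_of_eq (hQ KK).2 ?_
              push_cast
              ring
      · have h3 : Tendsto (fun KK : ℕ => (1/2:ℝ)^KK) atTop (𝓝 0) :=
          tendsto_pow_atTop_nhds_zero_of_lt_one (by norm_num) (by norm_num)
        have h4 := (h3.const_mul ε).mul_const (dist z m0)
        simpa using h4
    have hps : Tendsto (fun KK => ∑ j ∈ Finset.range KK, g j (z : X)) atTop
        (𝓝 (fw m0 h z)) := by
      simp only [hpart]
      simpa using tendsto_const_nhds.sub hlim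
    exact tendsto_nhds_unique (hsum (z : X)).hasSum.tendsto_sum_nat hps
  refine ⟨fun x => c⁻¹ • G x + f m0, ?_, fun m => ?_⟩
  · refine LipschitzWith.of_dist_le_mul fun x y => ?_
    have hdiff2 : (c⁻¹ • G x + f m0) - (c⁻¹ • G y + f m0) = c⁻¹ • (G x - G y) := by
      rw [add_sub_add_right_eq_sub, smul_sub]
    rw [dist_eq_norm, hdiff2, norm_smul, Real.norm_eq_abs, abs_of_pos (inv_pos.2 hcpos)]
    have hco : (((1 + Real.toNNReal (4 * (N:ℝ) / ε)) * K : ℝ≥0) : ℝ)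
        = (1 + 4 * (N:ℝ) / ε) * K := by
      push_cast [Real.coe_toNNReal _ (by positivity : (0:ℝ) ≤ 4 * (N:ℝ) / ε)]
      ring
    rw [dist_eq_norm, hco]
    calc c⁻¹ * ‖G x - G y‖ ≤ c⁻¹ * (2 * ((N:ℝ) * ‖x - y‖)) :=
          mul_le_mul_of_nonneg_left (hGdiff x y) (inv_nonneg.2 hcpos.le)
      _ ≤ (1 + 4 * (N:ℝ) / ε) * (K : ℝ) * ‖x - y‖ := by
          rw [hc, inv_div]
          have hd : (0:ℝ) ≤ ‖x - y‖ := norm_nonneg _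
          have hKd : (0:ℝ) ≤ (K:ℝ) * ‖x - y‖ := mul_nonneg hKpos.le hd
          have h1 : 2*(K:ℝ)/ε * (2*((N:ℝ)*‖x - y‖)) = 4*(N:ℝ)/ε*((K:ℝ)*‖x - y‖) := by
            ring
          have h2 : (1 + 4*(N:ℝ)/ε) * (K:ℝ) * ‖x - y‖
              = (K:ℝ)*‖x - y‖ + 4*(N:ℝ)/ε*((K:ℝ)*‖x - y‖) := by ring
          rw [h1, h2]
          linarith [hKd]
  · show c⁻¹ • G (m : X) + f m0 = f m
    rw [hGz m, hhfw, hft]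
    simp only
    rw [smul_smul, inv_mul_cancel₀ (ne_of_gt hcpos), one_smul, sub_add_cancel]
end
end

section
/- Let X and Y be Banach spaces such that (X,Y) has the μ-Lipschitz representation property for some μ ≥ 1. Then for every sequence (f_n)_{n≥1} of coarse Lipschitz maps from X to Y with ∑_{n=1}^∞ Lip_∞(f_n) < ∞, there exists a coarse Lipschitz map g: X → Y such that Lip_∞(g − ∑_{n=1}^N f_n) → 0 as N → ∞. (This expresses that the quotient space CL(X,Y) of coarse Lipschitz maps modulo maps with Lip_∞ = 0, equipped with the norm induced by Lip_∞, is a Banach space.) -/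
open Metric Filter Topology Pointwise
open scoped ENNReal NNReal

noncomputable section

/-- The pair `(X, Y)` has the `μ`-Lipschitz representation property. -/
def muLRP (X Y : Type*) [NormedAddCommGroup X] [NormedSpace ℝ X]
    [NormedAddCommGroup Y] [NormedSpace ℝ Y] (μ : ℝ) : Prop :=
  ∀ f : X → Y, CoarseLipschitz f → ∀ c : ℝ, lipInfty f < ENNReal.ofReal c →
    ∃ (g : X → Y) (K : ℝ≥0), g 0 = 0 ∧ LipschitzWith K g ∧ (K : ℝ) < μ * c ∧
      ∃ B : ℝ, ∀ x : X, ‖f x - g x‖ ≤ B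

lemma lip_key {X Y : Type*} [PseudoMetricSpace X] [SeminormedAddCommGroup Y]
    (h b : X → Y) (K : ℝ≥0) (hh : LipschitzWith K h) (B : ℝ) (hB : ∀ x, ‖b x‖ ≤ B) :
    lipInfty (fun x => h x + b x) ≤ (K : ℝ≥0∞) := by
  refine ENNReal.le_of_forall_pos_le_add fun ε hε _ => ?_
  set B' : ℝ := max B 0 with hB'
  have hB'0 : 0 ≤ B' := le_max_right _ _
  have hbB' : ∀ x, ‖b x‖ ≤ B' := fun x => (hB x).trans (le_max_left _ _)
  set s : ℝ := (2 * B' + 1) / ε with hs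
  have hspos : 0 < s := div_pos (by linarith) hε
  have h1 : lipInfty (fun x => h x + b x) ≤ lipS (fun x => h x + b x) s := by
    exact iInf₂_le s hspos
  refine h1.trans ?_
  refine iSup_le fun x => iSup_le fun y => iSup_le fun hxy => ?_
  have hd : 0 < dist x y := lt_of_lt_of_le hspos hxy
  have key : dist (h x + b x) (h y + b y) ≤ ((K : ℝ) + ε) * dist x y := by
    have h2 : dist (h x + b x) (h y + b y) ≤ dist (h x) (h y) + ‖b x - b y‖ := by
      calc dist (h x + b x) (h y + b y) = ‖(h x - h y) + (b x - b y)‖ := by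
            rw [dist_eq_norm]; congr 1; abel
        _ ≤ ‖h x - h y‖ + ‖b x - b y‖ := norm_add_le _ _
        _ = dist (h x) (h y) + ‖b x - b y‖ := by rw [dist_eq_norm]
    have h3 : ‖b x - b y‖ ≤ 2 * B' := by
      calc ‖b x - b y‖ ≤ ‖b x‖ + ‖b y‖ := norm_sub_le _ _
        _ ≤ 2 * B' := by have := hbB' x; have := hbB' y; linarith
    have h4 : dist (h x) (h y) ≤ (K : ℝ) * dist x y := hh.dist_le_mul x y
    have h5 : 2 * B' ≤ (ε : ℝ) * s := by
      have hε' : (ε : ℝ) ≠ 0 := NNReal.coe_ne_zero.2 hε.ne'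
      have heq : (ε : ℝ) * s = 2 * B' + 1 := by rw [hs]; field_simp
      linarith
    have h6 : (ε : ℝ) * s ≤ ε * dist x y :=
      mul_le_mul_of_nonneg_left hxy ε.coe_nonneg
    calc dist (h x + b x) (h y + b y) ≤ (K : ℝ) * dist x y + 2 * B' := by linarith
      _ ≤ (K : ℝ) * dist x y + ε * dist x y := by linarith
      _ = ((K : ℝ) + ε) * dist x y := by ring
  have h7 : dist (h x + b x) (h y + b y) / dist x y ≤ (K : ℝ) + ε := by
    rw [div_le_iff₀ hd]; exact key
  calc ENNReal.ofReal (dist (h x + b x) (h y + b y) / dist x y)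
      ≤ ENNReal.ofReal ((K : ℝ) + ε) := ENNReal.ofReal_le_ofReal h7
    _ = (K : ℝ≥0∞) + (ε : ℝ≥0∞) := by
        rw [ENNReal.ofReal_add K.coe_nonneg ε.coe_nonneg,
          ENNReal.ofReal_coe_nnreal, ENNReal.ofReal_coe_nnreal]

/-- under the `μ`-LRP, `CL(X,Y)` is complete: every absolutely convergent
series of coarse Lipschitz maps converges in the `Lip_∞` (semi-)norm. -/
theorem stmt6 {X Y : Type*} [NormedAddCommGroup X] [NormedSpace ℝ X] [CompleteSpace X]
    [NormedAddCommGroup Y] [NormedSpace ℝ Y] [CompleteSpace Y]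
    (μ : ℝ) (hμ : 1 ≤ μ) (hLRP : muLRP X Y μ)
    (f : ℕ → X → Y) (hf : ∀ n, CoarseLipschitz (f n))
    (hsum : ∑' n : ℕ, lipInfty (f n) < ⊤) :
    ∃ g : X → Y, CoarseLipschitz g ∧
      Tendsto (fun N : ℕ => lipInfty (fun x : X => g x - ∑ n ∈ Finset.range N, f n x))
        atTop (𝓝 0) := by
  classical
  have hfin : ∀ n, lipInfty (f n) ≠ ⊤ := fun n => (hf n).ne
  set c : ℕ → ℝ := fun n => (lipInfty (f n)).toReal + (1/2)^n with hc_def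
  have hclt : ∀ n, lipInfty (f n) < ENNReal.ofReal (c n) := by
    intro n
    conv_lhs => rw [← ENNReal.ofReal_toReal (hfin n)]
    rw [ENNReal.ofReal_lt_ofReal_iff (by positivity)]
    exact lt_add_of_pos_right _ (by positivity)
  choose g K hg0 hgl hKlt B hB using fun n => hLRP (f n) (hf n) (c n) (hclt n)
  have hcsum : Summable c := (ENNReal.summable_toReal hsum.ne).add summable_geometric_two
  have hKsum : Summable (fun n => (K n : ℝ)) :=
    Summable.of_nonneg_of_le (fun n => (K n).coe_nonneg)
      (fun n => (hKlt n).le) (hcsum.mul_left μ)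
  have hnorm : ∀ n x, ‖g n x‖ ≤ (K n : ℝ) * ‖x‖ := by
    intro n x
    have h := (hgl n).dist_le_mul x 0
    simpa [hg0 n, dist_eq_norm] using h
  have hgsum : ∀ x : X, Summable (fun n => g n x) := fun x =>
    Summable.of_norm (Summable.of_nonneg_of_le (fun n => norm_nonneg _)
      (fun n => hnorm n x) (hKsum.mul_right ‖x‖))
  set G : X → Y := fun x => ∑' n, g n x with hG
  have htail : ∀ N x, Summable (fun n => g (n + N) x) := fun N x =>
    (summable_nat_add_iff N).2 (hgsum x)
  have hKtail : ∀ N, Summable (fun n => (K (n + N) : ℝ)) := fun N =>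
    (summable_nat_add_iff N).2 hKsum
  set T : ℕ → ℝ := fun N => ∑' n, (K (n + N) : ℝ) with hT
  have hT0 : ∀ N, 0 ≤ T N := fun N => tsum_nonneg fun n => (K _).coe_nonneg
  have htlip : ∀ N, LipschitzWith (T N).toNNReal (fun x => ∑' n, g (n + N) x) := by
    intro N
    refine LipschitzWith.of_dist_le_mul fun x y => ?_
    rw [Real.coe_toNNReal _ (hT0 N)]
    have hsx := htail N x; have hsy := htail N y
    have hbnd : ∀ n, ‖g (n + N) x - g (n + N) y‖ ≤ (K (n + N) : ℝ) * dist x y := fun n => by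
      have h := (hgl (n + N)).dist_le_mul x y
      rwa [dist_eq_norm] at h
    have hsnorm : Summable (fun n => ‖g (n + N) x - g (n + N) y‖) :=
      Summable.of_nonneg_of_le (fun n => norm_nonneg _) hbnd ((hKtail N).mul_right _)
    have h1 : dist (∑' n, g (n + N) x) (∑' n, g (n + N) y)
        = ‖∑' n, (g (n + N) x - g (n + N) y)‖ := by
      rw [dist_eq_norm, Summable.tsum_sub hsx hsy]
    rw [h1]
    calc ‖∑' n, (g (n+N) x - g (n+N) y)‖ ≤ ∑' n, ‖g (n+N) x - g (n+N) y‖ :=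
          norm_tsum_le_tsum_norm hsnorm
      _ ≤ ∑' n, (K (n+N) : ℝ) * dist x y := Summable.tsum_le_tsum hbnd hsnorm ((hKtail N).mul_right _)
      _ = T N * dist x y := tsum_mul_right
  have hdecomp : ∀ N x, G x - ∑ n ∈ Finset.range N, f n x
      = (∑' n, g (n + N) x) + ∑ n ∈ Finset.range N, (g n x - f n x) := by
    intro N x
    have h1 := Summable.sum_add_tsum_nat_add N (hgsum x)
    rw [Finset.sum_sub_distrib, hG]
    simp only
    rw [← h1]; abel
  have hbound : ∀ N x, ‖∑ n ∈ Finset.range N, (g n x - f n x)‖ ≤ ∑ n ∈ Finset.range N, B n := by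
    intro N x
    refine (norm_sum_le _ _).trans (Finset.sum_le_sum fun n _ => ?_)
    rw [norm_sub_rev]; exact hB n x
  have hle : ∀ N, lipInfty (fun x : X => G x - ∑ n ∈ Finset.range N, f n x)
      ≤ ENNReal.ofReal (T N) := by
    intro N
    have heq : (fun x : X => G x - ∑ n ∈ Finset.range N, f n x)
        = fun x => (∑' n, g (n + N) x) + ∑ n ∈ Finset.range N, (g n x - f n x) :=
      funext (hdecomp N)
    rw [heq]
    have h := lip_key (fun x => ∑' n, g (n + N) x)
      (fun x => ∑ n ∈ Finset.range N, (g n x - f n x))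
      (T N).toNNReal (htlip N) (∑ n ∈ Finset.range N, B n) (hbound N)
    simpa [ENNReal.ofReal] using h
  have hGcl : CoarseLipschitz G := by
    have h0 := lip_key (fun x => ∑' n, g (n + 0) x) (fun _ => (0:Y)) (T 0).toNNReal (htlip 0) 0
      (by simp)
    have h1 : lipInfty G ≤ ((T 0).toNNReal : ℝ≥0∞) := by
      have heq : (fun x => (∑' n, g (n + 0) x) + 0) = G := by
        funext x; simp [hG]
      rwa [heq] at h0
    exact lt_of_le_of_lt h1 ENNReal.coe_lt_top
  refine ⟨G, hGcl, ?_⟩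
  have hTtend : Tendsto T atTop (𝓝 0) := tendsto_sum_nat_add (fun n => (K n : ℝ))
  have hofReal : Tendsto (fun N => ENNReal.ofReal (T N)) atTop (𝓝 0) := by
    simpa using ENNReal.tendsto_ofReal hTtend
  exact tendsto_of_tendsto_of_tendsto_of_le_of_le tendsto_const_nhds hofReal
    (fun N => zero_le) hle
end
end

section
/- Let X and Y be Banach spaces such that both (X,Y) and (Y,X) have the μ-Lipschitz representation property for some μ ≥ 1. Then for every coarse Lipschitz equivalence f: X → Y there exists ε > 0 such that for every map u: X → Y with Lip_∞(u) < ε, the map f − u is again a coarse Lipschitz equivalence from X to Y. -/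
open Metric Filter Topology Pointwise
open scoped ENNReal NNReal

noncomputable section

section Aux

lemma coarseLipschitz_of_close {M N : Type*} [PseudoMetricSpace M] [PseudoMetricSpace N]
    (h p : M → N) (K : ℝ≥0) (hp : LipschitzWith K p) (B : ℝ) (hB : 0 ≤ B)
    (hclose : ∀ x, dist (h x) (p x) ≤ B) : CoarseLipschitz h := by
  have h1 : lipInfty h ≤ lipS h 1 := by
    unfold lipInfty
    exact iInf₂_le 1 one_pos
  have h2 : lipS h 1 ≤ ENNReal.ofReal ((K : ℝ) + 2 * B) := by
    unfold lipS
    refine iSup_le fun x => iSup_le fun y => iSup_le fun hd => ?_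
    have hd0 : (0:ℝ) < dist x y := lt_of_lt_of_le one_pos hd
    refine ENNReal.ofReal_le_ofReal ?_
    rw [div_le_iff₀ hd0]
    have t1 := dist_triangle4 (h x) (p x) (p y) (h y)
    have t2 : dist (p y) (h y) ≤ B := by rw [dist_comm]; exact hclose y
    have t3 := hclose x
    have t4 := hp.dist_le_mul x y
    nlinarith [K.coe_nonneg]
  exact lt_of_le_of_lt (le_trans h1 h2) ENNReal.ofReal_lt_top

lemma coarseLipschitz_of_lipschitz {M N : Type*} [PseudoMetricSpace M] [PseudoMetricSpace N]
    (p : M → N) (K : ℝ≥0) (hp : LipschitzWith K p) : CoarseLipschitz p :=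
  coarseLipschitz_of_close p p K hp 0 le_rfl (fun x => by simp)

lemma lipInfty_lt_succ {M N : Type*} [PseudoMetricSpace M] [PseudoMetricSpace N] {h : M → N}
    (hh : CoarseLipschitz h) :
    lipInfty h < ENNReal.ofReal ((lipInfty h).toReal + 1) := by
  have h1 : lipInfty h ≠ ⊤ := hh.ne
  have h0 : (0:ℝ) ≤ (lipInfty h).toReal := ENNReal.toReal_nonneg
  conv_lhs => rw [← ENNReal.ofReal_toReal h1]
  rw [ENNReal.ofReal_lt_ofReal_iff (by linarith)]
  linarith

lemma perturb_id_inverse {E : Type*} [NormedAddCommGroup E] [NormedSpace ℝ E] [CompleteSpace E]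
    (v : E → E) (K : ℝ≥0) (hv : LipschitzWith K v) (hK : K < 1) :
    ∃ (T : E → E) (L : ℝ≥0), LipschitzWith L T ∧ ∀ y, T y - v (T y) = y := by
  haveI : Nonempty E := ⟨0⟩
  have hc : ∀ y : E, ContractingWith K (fun x => y + v x) := fun y =>
    ⟨hK, LipschitzWith.of_dist_le_mul fun a b => by
      simpa [dist_add_left] using hv.dist_le_mul a b⟩
  set T : E → E := fun y => ContractingWith.fixedPoint (fun x => y + v x) (hc y) with hT
  have hfix : ∀ y, y + v (T y) = T y := fun y => (hc y).fixedPoint_isFixedPt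
  have hK' : (K : ℝ) < 1 := hK
  have hLT : ∀ y y', dist (T y) (T y') ≤ (1 - (K:ℝ))⁻¹ * dist y y' := by
    intro y y'
    have key : dist (T y) (T y') ≤ dist y y' + K * dist (T y) (T y') := by
      calc dist (T y) (T y') = dist (y + v (T y)) (y' + v (T y')) := by
            rw [hfix y, hfix y']
        _ ≤ dist y y' + dist (v (T y)) (v (T y')) := dist_add_add_le _ _ _ _
        _ ≤ dist y y' + K * dist (T y) (T y') := by
            have := hv.dist_le_mul (T y) (T y'); linarith
    rw [inv_mul_eq_div, le_div_iff₀ (by linarith)]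
    nlinarith
  exact ⟨T, ⟨(1 - (K:ℝ))⁻¹, by rw [inv_nonneg]; linarith⟩, LipschitzWith.of_dist_le_mul hLT,
    fun y => by rw [sub_eq_iff_eq_add]; exact (hfix y).symm⟩

lemma isCLEquiv_of {X Y : Type*} [NormedAddCommGroup X] [NormedAddCommGroup Y]
    (e : X → Y) (q : Y → X) (he : CoarseLipschitz e) (hq : CoarseLipschitz q)
    (A Cb Cc : ℝ) (hA : 0 ≤ A) (hCb : 0 ≤ Cb) (hCc : 0 ≤ Cc)
    (hright : ∀ y, dist (e (q y)) y ≤ Cb)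
    (hexp : ∀ x x', dist x x' ≤ A * dist (e x) (e x') + Cc) :
    IsCLEquiv e := by
  refine ⟨he, q, hq, A * Cb + Cc + Cb, by nlinarith, fun x => ?_,
    fun y => (hright y).trans (by nlinarith)⟩
  have h1 := hexp (q (e x)) x
  have h2 := hright (e x)
  nlinarith [mul_le_mul_of_nonneg_left h2 hA]

end Aux

set_option maxHeartbeats 1000000

/-- under the `μ`-LRP on both sides, coarse Lipschitz equivalences are
stable under perturbation by maps of small `Lip_∞` norm. -/
theorem stmt7 {X Y : Type*} [NormedAddCommGroup X] [NormedSpace ℝ X] [CompleteSpace X]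
    [NormedAddCommGroup Y] [NormedSpace ℝ Y] [CompleteSpace Y]
    (μ : ℝ) (hμ : 1 ≤ μ) (hXY : muLRP X Y μ) (hYX : muLRP Y X μ)
    (f : X → Y) (hf : IsCLEquiv f) :
    ∃ ε : ℝ, 0 < ε ∧ ∀ u : X → Y, lipInfty u < ENNReal.ofReal ε →
      IsCLEquiv (fun x : X => f x - u x) := by
  obtain ⟨hfCL, g, hgCL, C, hC0, hgf, hfg⟩ := hf
  have hμ0 : (0:ℝ) < μ := lt_of_lt_of_le one_pos hμ
  obtain ⟨F, K_F, hF0, hFlip, hKF, B_F, hFB⟩ :=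
    hXY f hfCL ((lipInfty f).toReal + 1) (lipInfty_lt_succ hfCL)
  obtain ⟨G, K_G, hG0, hGlip, hKG, B_G, hGB⟩ :=
    hYX g hgCL ((lipInfty g).toReal + 1) (lipInfty_lt_succ hgCL)
  have hBF0 : 0 ≤ B_F := le_trans (norm_nonneg _) (hFB 0)
  have hBG0 : 0 ≤ B_G := le_trans (norm_nonneg _) (hGB 0)
  have hKG0 : (0:ℝ) ≤ K_G := K_G.coe_nonneg
  have hKF0 : (0:ℝ) ≤ K_F := K_F.coe_nonneg
  have hden : (0:ℝ) < 2 * μ * ((K_G:ℝ) + 1) := by nlinarith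
  refine ⟨1 / (2 * μ * ((K_G:ℝ) + 1)), by positivity, ?_⟩
  intro u hu
  have huCL : CoarseLipschitz u := lt_of_lt_of_le hu le_top
  obtain ⟨v, K_v, hv0, hvlip, hKv, B_u, huB⟩ := hXY u huCL _ hu
  have hBu0 : 0 ≤ B_u := le_trans (norm_nonneg _) (huB 0)
  have hKv0 : (0:ℝ) ≤ K_v := K_v.coe_nonneg
  -- smallness of the Lipschitz perturbation
  have hKvKG : (K_v:ℝ) * K_G ≤ 1/2 := by
    have h2 : μ * (1 / (2 * μ * ((K_G:ℝ) + 1))) = 1 / (2 * ((K_G:ℝ) + 1)) := by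
      field_simp
    have h1 : (K_v:ℝ) < 1 / (2 * ((K_G:ℝ) + 1)) := by rw [← h2]; exact hKv
    rw [lt_div_iff₀ (by linarith)] at h1
    nlinarith
  -- inverse of `id - v ∘ G` on Y
  have hv'lip : LipschitzWith (K_v * K_G) (v ∘ G) := hvlip.comp hGlip
  have hK'lt : K_v * K_G < 1 := by
    rw [← NNReal.coe_lt_coe]; push_cast; linarith
  obtain ⟨T, L_T, hTlip, hTfix⟩ := perturb_id_inverse (v ∘ G) (K_v * K_G) hv'lip hK'lt
  set b' : Y → Y := fun y => F (G y) - y with hb'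
  have hb'bound : ∀ y, ‖b' y‖ ≤ (K_F:ℝ) * B_G + B_F + C := by
    intro y
    have t1 : ‖F (G y) - F (g y)‖ ≤ (K_F:ℝ) * B_G := by
      have h1 := hFlip.dist_le_mul (G y) (g y)
      rw [dist_eq_norm, dist_eq_norm] at h1
      have h2 : ‖G y - g y‖ ≤ B_G := by rw [norm_sub_rev]; exact hGB y
      nlinarith
    have t2 : ‖F (g y) - f (g y)‖ ≤ B_F := by rw [norm_sub_rev]; exact hFB (g y)
    have t3 : ‖f (g y) - y‖ ≤ C := by have := hfg y; rwa [dist_eq_norm] at this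
    have hsplit : b' y = (F (G y) - F (g y)) + ((F (g y) - f (g y)) + (f (g y) - y)) := by
      rw [hb']; abel
    rw [hsplit]
    have n1 := norm_add_le (F (G y) - F (g y)) ((F (g y) - f (g y)) + (f (g y) - y))
    have n2 := norm_add_le (F (g y) - f (g y)) (f (g y) - y)
    linarith
  have hb'lip : LipschitzWith (K_F * K_G + 1) b' := by
    rw [hb']; exact (hFlip.comp hGlip).sub LipschitzWith.id
  -- the candidate coarse inverse
  set q : Y → X := fun y => G (T (y - b' (T y))) with hq'
  have hqlip : LipschitzWith (K_G * (L_T * (1 + (K_F * K_G + 1) * L_T))) q := by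
    rw [hq']
    exact hGlip.comp (hTlip.comp (LipschitzWith.id.sub (hb'lip.comp hTlip)))
  have hqCL : CoarseLipschitz q := coarseLipschitz_of_lipschitz q _ hqlip
  -- coarse Lipschitz of the perturbed map
  have heclose : ∀ x, dist (f x - u x) (F x - v x) ≤ B_F + B_u := by
    intro x
    rw [dist_eq_norm]
    have hsplit : (f x - u x) - (F x - v x) = (f x - F x) - (u x - v x) := by abel
    rw [hsplit]
    exact le_trans (norm_sub_le _ _) (add_le_add (hFB x) (huB x))
  have heCL : CoarseLipschitz (fun x : X => f x - u x) :=
    coarseLipschitz_of_close _ (fun x => F x - v x) (K_F + K_v) (hFlip.sub hvlip)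
      (B_F + B_u) (by linarith) heclose
  -- the right-inverse estimate
  have hright : ∀ y : Y, dist (f (q y) - u (q y)) y
      ≤ (B_F + B_u) + 2 * ((K_F:ℝ) * B_G + B_F + C) := by
    intro y
    set z : Y := T (y - b' (T y)) with hz
    have hqy : q y = G z := by rw [hq']
    have key : (F (G z) - v (G z)) - y = b' z - b' (T y) := by
      have h1 : z - (v ∘ G) z = y - b' (T y) := by rw [hz]; exact hTfix (y - b' (T y))
      simp only [Function.comp_apply] at h1
      have h2 : F (G z) = b' z + z := by rw [hb']; simp only; abel
      rw [h2, add_sub_assoc, h1]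
      abel
    rw [hqy, dist_eq_norm]
    have hsplit : (f (G z) - u (G z)) - y
        = ((f (G z) - F (G z)) - (u (G z) - v (G z))) + ((F (G z) - v (G z)) - y) := by abel
    rw [hsplit, key]
    have n1 := norm_add_le ((f (G z) - F (G z)) - (u (G z) - v (G z))) (b' z - b' (T y))
    have n2 := norm_sub_le (f (G z) - F (G z)) (u (G z) - v (G z))
    have n3 := norm_sub_le (b' z) (b' (T y))
    have n4 := hb'bound z
    have n5 := hb'bound (T y)
    have n6 := hFB (G z)
    have n7 := huB (G z)
    linarith
  -- the expansiveness estimate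
  have hexp : ∀ x x' : X, dist x x'
      ≤ 2 * (K_G:ℝ) * dist (f x - u x) (f x' - u x')
        + (8 * (K_G:ℝ) * B_F + 4 * (K_G:ℝ) * B_u + 4 * B_G + 4 * C) := by
    intro x x'
    have a1 : dist x x' ≤ dist (g (f x)) (g (f x')) + 2 * C := by
      have t3 := dist_triangle4 x (g (f x)) (g (f x')) x'
      rw [dist_comm x (g (f x))] at t3
      have := hgf x
      have := hgf x'
      linarith
    have a2 : dist (g (f x)) (g (f x')) ≤ (K_G:ℝ) * dist (f x) (f x') + 2 * B_G := by
      have s1 := hGlip.dist_le_mul (f x) (f x')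
      have s2 := dist_triangle4 (g (f x)) (G (f x)) (G (f x')) (g (f x'))
      have s3 : dist (g (f x)) (G (f x)) ≤ B_G := by rw [dist_eq_norm]; exact hGB (f x)
      have s4 : dist (G (f x')) (g (f x')) ≤ B_G := by
        rw [dist_comm, dist_eq_norm]; exact hGB (f x')
      linarith
    have a3 : dist (f x) (f x') ≤ dist (F x) (F x') + 2 * B_F := by
      have s2 := dist_triangle4 (f x) (F x) (F x') (f x')
      have s3 : dist (f x) (F x) ≤ B_F := by rw [dist_eq_norm]; exact hFB x
      have s4 : dist (F x') (f x') ≤ B_F := by rw [dist_comm, dist_eq_norm]; exact hFB x'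
      linarith
    have a4 : dist (F x) (F x') ≤ dist (f x - u x) (f x' - u x')
        + (2 * B_F + 2 * B_u) + (K_v:ℝ) * dist x x' := by
      have s1 : F x - F x' = ((f x - u x) - (f x' - u x'))
          + (((F x - f x) + (u x - v x)) + (((f x' - F x') + (v x' - u x')) + (v x - v x'))) := by
        abel
      have n1 : ‖F x - f x‖ ≤ B_F := by rw [norm_sub_rev]; exact hFB x
      have n2 : ‖f x' - F x'‖ ≤ B_F := hFB x'
      have n3 : ‖u x - v x‖ ≤ B_u := huB x
      have n4 : ‖v x' - u x'‖ ≤ B_u := by rw [norm_sub_rev]; exact huB x'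
      have n5 : ‖v x - v x'‖ ≤ (K_v:ℝ) * dist x x' := by
        have := hvlip.dist_le_mul x x'; rwa [dist_eq_norm] at this
      have t1 := norm_add_le ((f x - u x) - (f x' - u x'))
        (((F x - f x) + (u x - v x)) + (((f x' - F x') + (v x' - u x')) + (v x - v x')))
      have t2 := norm_add_le ((F x - f x) + (u x - v x))
        (((f x' - F x') + (v x' - u x')) + (v x - v x'))
      have t3 := norm_add_le (F x - f x) (u x - v x)
      have t4 := norm_add_le ((f x' - F x') + (v x' - u x')) (v x - v x')
      have t5 := norm_add_le (f x' - F x') (v x' - u x')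
      rw [dist_eq_norm, dist_eq_norm, s1]
      linarith
    have pk : (K_v:ℝ) * (K_G:ℝ) * dist x x' ≤ (1/2) * dist x x' :=
      mul_le_mul_of_nonneg_right hKvKG dist_nonneg
    nlinarith [mul_le_mul_of_nonneg_left a3 hKG0, mul_le_mul_of_nonneg_left a4 hKG0]
  -- assemble
  have hC1 : (0:ℝ) ≤ (K_F:ℝ) * B_G + B_F + C := by nlinarith
  refine isCLEquiv_of _ q heCL hqCL (2 * (K_G:ℝ))
    ((B_F + B_u) + 2 * ((K_F:ℝ) * B_G + B_F + C))
    (8 * (K_G:ℝ) * B_F + 4 * (K_G:ℝ) * B_u + 4 * B_G + 4 * C)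
    (by linarith) (by linarith) (by nlinarith) (fun y => hright y) (fun x x' => hexp x x')
end
end

section
/- There exist infinite-dimensional Banach spaces X and Y, a coarse Lipschitz map f: X → Y with Lip_∞(f) > 0, and ε > 0, such that every coarse Lipschitz map g: X → Y with Lip_∞(f − g) < ε does not attain its norm in any direction y ∈ S_Y. (In the paper's formulation: there exists a pair of Banach spaces (X,Y) such that the norm attaining coarse Lipschitz maps are not dense in CL(X,Y).) -/
open Metric Filter Topology Pointwise
open scoped ENNReal NNReal

noncomputable section

/-- `f` attains its norm `Lip_∞(f)` in the direction `y`. -/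
def AttainsNorm {X Y : Type*} [NormedAddCommGroup X] [NormedSpace ℝ X]
    [NormedAddCommGroup Y] [NormedSpace ℝ Y] (f : X → Y) (y : Y) : Prop :=
  ∃ s t : ℕ → X, (∀ n, s n ≠ t n) ∧
    Tendsto (fun n => ‖s n - t n‖) atTop atTop ∧
    Tendsto (fun n => (‖s n - t n‖)⁻¹ • (f (t n) - f (s n))) atTop
      (𝓝 ((lipInfty f).toReal • y))

namespace Stmt19Aux

open ZeroAtInftyContinuousMap

/-- The space `c₀` of sequences vanishing at infinity. -/
abbrev X0 : Type := ZeroAtInftyContinuousMap ℕ ℝ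

lemma coord_le_norm (x : X0) (k : ℕ) : |x k| ≤ ‖x‖ := by
  simpa [Real.norm_eq_abs] using BoundedContinuousFunction.norm_coe_le_norm x.toBCF k

lemma norm_le_of_coords {x : X0} {C : ℝ} (hC : 0 ≤ C) (h : ∀ k, |x k| ≤ C) : ‖x‖ ≤ C := by
  rw [← norm_toBCF_eq_norm]
  exact (BoundedContinuousFunction.norm_le hC).mpr (by simpa [Real.norm_eq_abs] using h)

/-- delta functions in `c₀`. -/
def deltaN (j : ℕ) : X0 :=
  ⟨⟨fun n => if n = j then 1 else 0, continuous_of_discreteTopology⟩, by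
    rw [cocompact_eq_cofinite, Nat.cofinite_eq_atTop]
    have h : ∀ᶠ n in atTop, (0 : ℝ) = if n = j then 1 else 0 := by
      filter_upwards [eventually_ge_atTop (j + 1)] with n hn
      simp [Nat.ne_of_gt hn]
    exact Tendsto.congr' h tendsto_const_nhds⟩

@[simp] lemma deltaN_apply (j n : ℕ) : deltaN j n = if n = j then 1 else 0 := rfl

/-- evaluation at a point as a linear map on `c₀`. -/
def evalLM (j : ℕ) : X0 →ₗ[ℝ] ℝ where
  toFun x := x j
  map_add' x y := by simp [coe_add]
  map_smul' c x := by simp [coe_smul]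

lemma deltaN_linearIndependent : LinearIndependent ℝ deltaN := by
  rw [linearIndependent_iff']
  intro s g h j hj
  have h2 := congrArg (evalLM j) h
  rw [map_sum, map_zero] at h2
  have : ∀ i ∈ s, evalLM j (g i • deltaN i) = if i = j then g i else 0 := by
    intro i _
    by_cases hij : i = j
    · simp [evalLM, coe_smul, hij]
    · simp [evalLM, coe_smul, hij, if_neg (Ne.symm hij)]
  rw [Finset.sum_congr rfl this, Finset.sum_ite_eq' s j g, if_pos hj] at h2
  exact h2

lemma X0_not_finiteDimensional : ¬ FiniteDimensional ℝ X0 := by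
  intro h
  have : Finite ℕ := deltaN_linearIndependent.finite
  exact not_finite ℕ

lemma norm_smul' (c : ℝ) (x : X0) : ‖c • x‖ = ‖c‖ * ‖x‖ := norm_smul c x

lemma sub_smul' (c d : ℝ) (x : X0) : (c - d) • x = c • x - d • x := sub_smul c d x

lemma smul_sub' (c : ℝ) (x y : X0) : c • (x - y) = c • x - c • y := smul_sub c x y

lemma coord_smul (c : ℝ) (x : X0) (j : ℕ) : (c • x) j = c * x j := rfl

lemma coord_sub (x y : X0) (j : ℕ) : (x - y) j = x j - y j := rfl

/-- the truncated coordinate function: the length of `[2^k, 2^(k+1)] ∩ [0, r]`. -/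
def ck (k : ℕ) (r : ℝ) : ℝ := min (max (r - 2 ^ k) 0) (2 ^ k)

lemma ck_nonneg (k : ℕ) (r : ℝ) : 0 ≤ ck k r :=
  le_min (le_max_right _ _) (by positivity)

lemma ck_le (k : ℕ) (r : ℝ) : ck k r ≤ 2 ^ k := min_le_right _ _

lemma ck_dist (k : ℕ) (a b : ℝ) : |ck k b - ck k a| ≤ |b - a| := by
  unfold ck
  refine (abs_min_sub_min_le_max _ _ _ _).trans ?_
  have h1 : |max (b - 2 ^ k) 0 - max (a - 2 ^ k) 0| ≤ |b - a| := by
    refine (abs_max_sub_max_le_max _ _ _ _).trans ?_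
    simp only [sub_zero, abs_zero]
    have : b - 2 ^ k - (a - 2 ^ k) = b - a := by ring
    rw [this]
    exact max_le le_rfl (abs_nonneg _)
  exact max_le h1 (by rw [sub_self, abs_zero]; exact abs_nonneg _)

lemma ck_eq_zero {k : ℕ} {r : ℝ} (h : r ≤ 2 ^ k) : ck k r = 0 := by
  unfold ck
  rw [max_eq_right (by linarith), min_eq_left (by positivity)]

lemma ck_step_diff (k : ℕ) : ck k (2 ^ (k + 1)) - ck k (2 ^ k) = 2 ^ k := by
  have h1 : ck k (2 ^ k) = 0 := ck_eq_zero le_rfl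
  have h2 : ck k (2 ^ (k + 1)) = 2 ^ k := by
    unfold ck
    have : (2 : ℝ) ^ (k + 1) - 2 ^ k = 2 ^ k := by ring
    rw [this, max_eq_left (by positivity), min_self]
  rw [h1, h2, sub_zero]

/-- the path `F : ℝ → c₀`. -/
def Fc (r : ℝ) : X0 :=
  ⟨⟨fun k => ck k r, continuous_of_discreteTopology⟩, by
    rw [cocompact_eq_cofinite, Nat.cofinite_eq_atTop]
    obtain ⟨m, hm⟩ := pow_unbounded_of_one_lt r (one_lt_two (α := ℝ))
    have h : ∀ᶠ k in atTop, (0 : ℝ) = ck k r := by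
      filter_upwards [eventually_ge_atTop m] with k hk
      exact (ck_eq_zero (hm.le.trans (pow_le_pow_right₀ one_le_two hk))).symm
    exact Tendsto.congr' h tendsto_const_nhds⟩

@[simp] lemma Fc_apply (r : ℝ) (k : ℕ) : Fc r k = ck k r := rfl

lemma norm_Fc_sub_le (a b : ℝ) : ‖Fc b - Fc a‖ ≤ |b - a| := by
  refine norm_le_of_coords (abs_nonneg _) fun k => ?_
  rw [coe_sub]
  simpa using ck_dist k a b

lemma norm_Fc_step (k : ℕ) : ‖Fc (2 ^ (k + 1)) - Fc (2 ^ k)‖ = (2 : ℝ) ^ k := by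
  refine le_antisymm ?_ ?_
  · refine norm_le_of_coords (by positivity) fun j => ?_
    rw [coe_sub]
    have := ck_dist j (2 ^ k) (2 ^ (k + 1))
    have h2 : |(2 : ℝ) ^ (k + 1) - 2 ^ k| = 2 ^ k := by
      rw [show (2:ℝ) ^ (k + 1) - 2 ^ k = 2 ^ k by ring]
      exact abs_of_nonneg (by positivity)
    simpa [h2] using this
  · have := coord_le_norm (Fc (2 ^ (k + 1)) - Fc (2 ^ k)) k
    rw [coe_sub] at this
    simpa [ck_step_diff k, abs_of_nonneg (by positivity : (0:ℝ) ≤ (2:ℝ)^k)] using this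

/-- the map `f : c₀ → c₀`. -/
def fmap (x : X0) : X0 := Fc ‖x‖

section LipLemmas

variable {M N : Type*} [PseudoMetricSpace M] [PseudoMetricSpace N]

lemma le_lipS (f : M → N) {s : ℝ} {x y : M} (h : s ≤ dist x y) :
    ENNReal.ofReal (dist (f x) (f y) / dist x y) ≤ lipS f s :=
  le_iSup_of_le x <| le_iSup_of_le y <| le_iSup_of_le h le_rfl

lemma lipS_le {f : M → N} {s : ℝ} {C : ℝ≥0∞}
    (h : ∀ x y : M, s ≤ dist x y → ENNReal.ofReal (dist (f x) (f y) / dist x y) ≤ C) :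
    lipS f s ≤ C :=
  iSup_le fun x => iSup_le fun y => iSup_le fun hxy => h x y hxy

lemma lipS_antitone (f : M → N) {s s' : ℝ} (h : s ≤ s') : lipS f s' ≤ lipS f s :=
  lipS_le fun _ _ hxy => le_lipS f (h.trans hxy)

lemma lipInfty_le_lipS (f : M → N) {s : ℝ} (hs : 0 < s) : lipInfty f ≤ lipS f s :=
  iInf_le_of_le s (iInf_le_of_le hs le_rfl)

lemma le_lipInfty {f : M → N} {C : ℝ≥0∞} (h : ∀ s : ℝ, 0 < s → C ≤ lipS f s) :
    C ≤ lipInfty f :=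
  le_iInf fun s => le_iInf fun hs => h s hs

end LipLemmas

section LipNormed

variable {E F : Type*} [NormedAddCommGroup E] [NormedAddCommGroup F]

lemma lipS_triangle (f g : E → F) {s : ℝ} (hs : 0 < s) :
    lipS f s ≤ lipS g s + lipS (fun x => f x - g x) s := by
  refine lipS_le fun x y hxy => ?_
  have hd : 0 < dist x y := hs.trans_le hxy
  have hkey : dist (f x) (f y) ≤ dist (g x) (g y) + dist (f x - g x) (f y - g y) := by
    simp only [dist_eq_norm]
    have : f x - f y = (g x - g y) + ((f x - g x) - (f y - g y)) := by abel
    rw [this]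
    exact norm_add_le _ _
  calc ENNReal.ofReal (dist (f x) (f y) / dist x y)
      ≤ ENNReal.ofReal ((dist (g x) (g y) + dist (f x - g x) (f y - g y)) / dist x y) := by
        exact ENNReal.ofReal_le_ofReal (by gcongr)
    _ = ENNReal.ofReal (dist (g x) (g y) / dist x y)
        + ENNReal.ofReal (dist (f x - g x) (f y - g y) / dist x y) := by
        rw [add_div, ENNReal.ofReal_add (by positivity) (by positivity)]
    _ ≤ lipS g s + lipS (fun x => f x - g x) s :=
        add_le_add (le_lipS g hxy) (le_lipS (fun x => f x - g x) hxy)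

end LipNormed

/-- `lipS f s ≥ 1` for every positive `s`, for `f = fmap`. -/
lemma one_le_lipS_fmap {s : ℝ} (hs : 0 < s) : (1 : ℝ≥0∞) ≤ lipS fmap s := by
  obtain ⟨k, hk⟩ := pow_unbounded_of_one_lt s (one_lt_two (α := ℝ))
  have hu : ‖deltaN 0‖ = 1 := by
    refine le_antisymm (norm_le_of_coords zero_le_one fun j => ?_) ?_
    · by_cases hj : j = 0 <;> simp [hj]
    · simpa using coord_le_norm (deltaN 0) 0
  have hns : ∀ c : ℝ, 0 ≤ c → ‖c • deltaN 0‖ = c := fun c hc => by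
    rw [norm_smul', hu, Real.norm_eq_abs, abs_of_nonneg hc, mul_one]
  set x : X0 := ((2 : ℝ) ^ (k + 1)) • deltaN 0 with hxdef
  set y : X0 := ((2 : ℝ) ^ k) • deltaN 0 with hydef
  have hxy : x - y = ((2 : ℝ) ^ k) • deltaN 0 := by
    have h1 : ((2 : ℝ) ^ (k + 1) - 2 ^ k) • deltaN 0 = x - y := sub_smul' _ _ _
    rw [← h1, show (2:ℝ) ^ (k + 1) - 2 ^ k = 2 ^ k by ring]
  have hdxy : dist x y = 2 ^ k := by
    rw [dist_eq_norm, hxy]; exact hns _ (by positivity)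
  have hnx : ‖x‖ = 2 ^ (k + 1) := hns _ (by positivity)
  have hny : ‖y‖ = 2 ^ k := hns _ (by positivity)
  have hstep : dist (fmap x) (fmap y) = 2 ^ k := by
    rw [dist_eq_norm]
    unfold fmap
    rw [hnx, hny, norm_Fc_step]
  have h1 : ENNReal.ofReal (dist (fmap x) (fmap y) / dist x y) ≤ lipS fmap s := by
    refine le_lipS fmap ?_
    rw [hdxy]; exact hk.le
  rw [hstep, hdxy, div_self (by positivity)] at h1
  simpa using h1

lemma lipS_fmap_le {s : ℝ} (hs : 0 < s) : lipS fmap s ≤ 1 := by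
  refine lipS_le fun x y hxy => ?_
  have hd : 0 < dist x y := hs.trans_le hxy
  have h1 : dist (fmap x) (fmap y) ≤ dist x y := by
    rw [dist_eq_norm, dist_eq_norm]
    refine (norm_Fc_sub_le ‖y‖ ‖x‖).trans ?_
    exact abs_norm_sub_norm_le x y
  calc ENNReal.ofReal (dist (fmap x) (fmap y) / dist x y)
      ≤ ENNReal.ofReal (dist x y / dist x y) := ENNReal.ofReal_le_ofReal (by gcongr)
    _ = 1 := by rw [div_self hd.ne', ENNReal.ofReal_one]

lemma lipInfty_fmap_eq_one : lipInfty fmap = 1 :=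
  le_antisymm ((lipInfty_le_lipS fmap one_pos).trans (lipS_fmap_le one_pos))
    (le_lipInfty fun _ hs => one_le_lipS_fmap hs)

section Generic

variable {E : Type*} [NormedAddCommGroup E] [NormedSpace ℝ E]

lemma norm_real_smul (c : ℝ) (z : E) : ‖c • z‖ = |c| * ‖z‖ := by
  rw [norm_smul, Real.norm_eq_abs]

lemma smul_diff_norm_le {d : ℝ} (hd : 0 < d) (A B : E) (hAB : ‖A - B‖ ≤ d * (1 / 100)) :
    ‖d⁻¹ • A - d⁻¹ • B‖ ≤ 1 / 100 := by
  rw [← smul_sub, norm_real_smul, abs_of_nonneg (inv_nonneg.mpr hd.le)]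
  calc d⁻¹ * ‖A - B‖ ≤ d⁻¹ * (d * (1 / 100)) := by
        exact mul_le_mul_of_nonneg_left hAB (inv_nonneg.mpr hd.le)
    _ = 1 / 100 := by field_simp

end Generic

theorem main :
    ∃ (X : Type) (_ : NormedAddCommGroup X) (_ : NormedSpace ℝ X) (_ : CompleteSpace X)
      (Y : Type) (_ : NormedAddCommGroup Y) (_ : NormedSpace ℝ Y) (_ : CompleteSpace Y),
      ¬ FiniteDimensional ℝ X ∧ ¬ FiniteDimensional ℝ Y ∧
      ∃ (f : X → Y) (ε : ℝ), CoarseLipschitz f ∧ 0 < lipInfty f ∧ 0 < ε ∧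
        ∀ g : X → Y, CoarseLipschitz g →
          lipInfty (fun x : X => f x - g x) < ENNReal.ofReal ε →
          ∀ y : Y, ‖y‖ = 1 → ¬ AttainsNorm g y := by
  classical
  refine ⟨X0, inferInstance, inferInstance, inferInstance, X0, inferInstance, inferInstance,
    inferInstance, X0_not_finiteDimensional, X0_not_finiteDimensional, fmap, 1 / 100,
    ?_, ?_, by norm_num, ?_⟩
  · exact lt_of_le_of_lt ((lipInfty_le_lipS fmap one_pos).trans (lipS_fmap_le one_pos))
      ENNReal.one_lt_top
  · rw [lipInfty_fmap_eq_one]; exact zero_lt_one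
  intro g hg hnear y hy hatt
  set Fd : X0 → X0 := fun x => fmap x - g x with hFd
  -- a scale on which f and g are (1/100)-close in the coarse Lipschitz sense
  have hex : ∃ s₀ : ℝ, 0 < s₀ ∧ lipS Fd s₀ < ENNReal.ofReal (1 / 100) := by
    by_contra hcon
    push_neg at hcon
    exact absurd hnear (not_lt.mpr (le_lipInfty fun s hs => hcon s hs))
  obtain ⟨s₀, hs₀, hlipF⟩ := hex
  have hFbound : ∀ x x' : X0, s₀ ≤ dist x x' → dist (Fd x) (Fd x') ≤ dist x x' * (1 / 100) := by
    intro x x' hxx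
    have hd : 0 < dist x x' := hs₀.trans_le hxx
    have h1 : ENNReal.ofReal (dist (Fd x) (Fd x') / dist x x') < ENNReal.ofReal (1 / 100) :=
      lt_of_le_of_lt (le_lipS Fd hxx) hlipF
    have h2 : dist (Fd x) (Fd x') / dist x x' < 1 / 100 :=
      (ENNReal.ofReal_lt_ofReal_iff (by norm_num)).mp h1
    nlinarith [(div_lt_iff₀ hd).mp h2]
  -- lower bound for the coarse Lipschitz constant of g
  have hLlow : ENNReal.ofReal (99 / 100) ≤ lipInfty g := by
    refine le_lipInfty fun s hs => ?_
    have hm : 0 < max s s₀ := lt_max_of_lt_left hs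
    have h1 : (1 : ℝ≥0∞) ≤ lipS fmap (max s s₀) := one_le_lipS_fmap hm
    have h2 : lipS fmap (max s s₀) ≤ lipS g (max s s₀) + lipS Fd (max s s₀) :=
      lipS_triangle fmap g hm
    have h3 : lipS g (max s s₀) ≤ lipS g s := lipS_antitone g (le_max_left _ _)
    have h4 : lipS Fd (max s s₀) ≤ ENNReal.ofReal (1 / 100) :=
      (lipS_antitone Fd (le_max_right _ _)).trans hlipF.le
    have h5 : (1 : ℝ≥0∞) ≤ lipS g s + ENNReal.ofReal (1 / 100) :=
      h1.trans (h2.trans (add_le_add h3 h4))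
    have h6 : (1 : ℝ≥0∞) - ENNReal.ofReal (1 / 100) ≤ lipS g s := tsub_le_iff_right.mpr h5
    calc ENNReal.ofReal (99 / 100) = 1 - ENNReal.ofReal (1 / 100) := by
          rw [← ENNReal.ofReal_one, ← ENNReal.ofReal_sub _ (by norm_num : (0:ℝ) ≤ 1 / 100)]
          norm_num
      _ ≤ lipS g s := h6
  set L : ℝ := (lipInfty g).toReal with hLdef
  have hL : 99 / 100 ≤ L := by
    have h := ENNReal.toReal_mono hg.ne hLlow
    rwa [ENNReal.toReal_ofReal (by norm_num : (0:ℝ) ≤ 99 / 100)] at h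
  obtain ⟨sq, tq, hne, hdst, hconv⟩ := hatt
  set q : X0 := L • y with hqdef
  have hnq : ‖q‖ = L := by
    have h := norm_real_smul L y
    rw [hy, abs_of_nonneg (by linarith : (0:ℝ) ≤ L), mul_one] at h
    rw [hqdef]
    exact h
  -- q vanishes at infinity
  obtain ⟨N, hN⟩ : ∃ N : ℕ, ∀ k ≥ N, |q k| < 1 / 2 := by
    have hq0 : Tendsto (fun k => q k) atTop (𝓝 0) := by
      have h := zero_at_infty (f := q)
      rwa [cocompact_eq_cofinite, Nat.cofinite_eq_atTop] at h
    have h := Metric.tendsto_nhds.mp hq0 (1 / 2) (by norm_num)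
    rw [eventually_atTop] at h
    obtain ⟨N, hN⟩ := h
    exact ⟨N, fun k hk => by simpa [Real.dist_eq] using hN k hk⟩
  -- choose a good index n
  have E1 : ∀ᶠ n in atTop, s₀ ≤ ‖sq n - tq n‖ := hdst.eventually_ge_atTop s₀
  have E2 : ∀ᶠ n in atTop, 2 * 2 ^ N ≤ ‖sq n - tq n‖ := hdst.eventually_ge_atTop _
  have E3 : ∀ᶠ n in atTop,
      ‖(‖sq n - tq n‖)⁻¹ • (g (tq n) - g (sq n)) - q‖ < 1 / 100 := by
    filter_upwards [Metric.tendsto_nhds.mp hconv (1 / 100) (by norm_num)] with n hn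
    rwa [dist_eq_norm] at hn
  obtain ⟨n, hE1, hE2, hE3⟩ := (E1.and (E2.and E3)).exists
  set d : ℝ := ‖sq n - tq n‖ with hddef
  have hd0 : 0 < d := hs₀.trans_le hE1
  set w : X0 := d⁻¹ • (g (tq n) - g (sq n)) with hwdef
  set v : X0 := d⁻¹ • (fmap (tq n) - fmap (sq n)) with hvdef
  -- v and w are 1/100-close
  have hvw : ‖v - w‖ ≤ 1 / 100 := by
    refine smul_diff_norm_le hd0 _ _ ?_
    have h1 : (fmap (tq n) - fmap (sq n)) - (g (tq n) - g (sq n)) = Fd (tq n) - Fd (sq n) := by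
      simp only [hFd]; abel
    rw [h1]
    have h2 : dist (Fd (tq n)) (Fd (sq n)) ≤ dist (tq n) (sq n) * (1 / 100) := by
      refine hFbound _ _ ?_
      rw [dist_eq_norm, norm_sub_rev]
      exact hE1
    rw [dist_eq_norm, dist_eq_norm, norm_sub_rev (tq n)] at h2
    exact h2.trans (by rw [← hddef])
  have hwq : ‖w - q‖ ≤ 1 / 100 := le_of_lt hE3
  have hvq : ‖v - q‖ ≤ 2 / 100 := by
    calc ‖v - q‖ = ‖(v - w) + (w - q)‖ := by abel_nf
      _ ≤ ‖v - w‖ + ‖w - q‖ := norm_add_le _ _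
      _ ≤ 2 / 100 := by linarith
  have hnv : 97 / 100 ≤ ‖v‖ := by
    have h1 : ‖q‖ - ‖v - q‖ ≤ ‖v‖ := by
      have := norm_sub_norm_le q v
      have h2 : ‖q - v‖ = ‖v - q‖ := norm_sub_rev q v
      linarith [norm_sub_norm_le q v, (norm_sub_rev q v ▸ le_refl ‖q - v‖)]
    linarith [hnq ▸ h1]
  -- a big coordinate of v
  obtain ⟨K, hK⟩ : ∃ K : ℕ, 9 / 10 < |v K| := by
    by_contra hcon
    push_neg at hcon
    have := norm_le_of_coords (by norm_num : (0:ℝ) ≤ 9 / 10) hcon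
    linarith
  -- K must be below N
  have hqK : 1 / 2 ≤ |q K| := by
    have h1 : |v K - q K| ≤ ‖v - q‖ := by
      have := coord_le_norm (v - q) K
      rwa [coord_sub] at this
    have h2 : |q K| ≥ |v K| - |v K - q K| := by
      have := abs_sub_abs_le_abs_sub (v K) (q K)
      linarith [abs_sub_abs_le_abs_sub (v K) (q K)]
    linarith
  have hKN : K < N := by
    by_contra hcon
    push_neg at hcon
    exact absurd (hN K hcon) (not_lt.mpr hqK)
  -- but the K-th coordinate of v is at most 2^K / d ≤ 1/2 : contradiction
  have hvcoord : |v K| ≤ 2 ^ K / d := by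
    have h1 : v K = d⁻¹ * ((fmap (tq n)) K - (fmap (sq n)) K) := rfl
    have h2 : |(fmap (tq n)) K - (fmap (sq n)) K| ≤ 2 ^ K := by
      have ha := ck_nonneg K ‖sq n‖
      have hb := ck_nonneg K ‖tq n‖
      have ha' := ck_le K ‖sq n‖
      have hb' := ck_le K ‖tq n‖
      have : (fmap (tq n)) K = ck K ‖tq n‖ := rfl
      have h3 : (fmap (sq n)) K = ck K ‖sq n‖ := rfl
      rw [this, h3, abs_le]
      constructor <;> linarith
    rw [h1, abs_mul, abs_of_nonneg (inv_nonneg.mpr hd0.le)]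
    rw [div_eq_inv_mul]
    exact mul_le_mul_of_nonneg_left h2 (inv_nonneg.mpr hd0.le)
  have hfinal : (2:ℝ) ^ K / d ≤ 1 / 2 := by
    have hKN' : (2:ℝ) ^ K ≤ 2 ^ N := by
      exact pow_le_pow_right₀ (by norm_num) hKN.le
    rw [div_le_iff₀ hd0]
    nlinarith [pow_pos (by norm_num : (0:ℝ) < 2) N]
  linarith

end Stmt19Aux

/-- there is a pair of Banach spaces `(X,Y)` for which the norm
attaining coarse Lipschitz maps are not dense in `CL(X,Y)`. -/
theorem stmt19 :
    ∃ (X : Type) (_ : NormedAddCommGroup X) (_ : NormedSpace ℝ X) (_ : CompleteSpace X)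
      (Y : Type) (_ : NormedAddCommGroup Y) (_ : NormedSpace ℝ Y) (_ : CompleteSpace Y),
      ¬ FiniteDimensional ℝ X ∧ ¬ FiniteDimensional ℝ Y ∧
      ∃ (f : X → Y) (ε : ℝ), CoarseLipschitz f ∧ 0 < lipInfty f ∧ 0 < ε ∧
        ∀ g : X → Y, CoarseLipschitz g →
          lipInfty (fun x : X => f x - g x) < ENNReal.ofReal ε →
          ∀ y : Y, ‖y‖ = 1 → ¬ AttainsNorm g y := by
  exact Stmt19Aux.main
end
end
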